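/- arXiv:2108.00693 — 11 statements merged into one kernel-verified Lean document; each statement's English description precedes it below -/
import Mathlib

section
/- Let x : [t0, t*) → ℝ be a Schwarzschild profile solution (for any integer n ≥ 3). Then the function Ψ(t) = t·x'(t) − x(t) satisfies Ψ(t0) = 0, Ψ'(t) > 0 for all t ∈ (t0, t*), and Ψ(t) ≥ 0 for all t ∈ [t0, t*); consequently x'(t) ≥ x(t)/t > 0 for all t ∈ [t0, t*), so x is strictly increasing on [t0, t*). -/
/-- The coefficient function χ(x,t) = 2m(n−1)/(2(x²+t²)^n + m(x²+t²)). -/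
noncomputable def schChi (n : ℕ) (m x t : ℝ) : ℝ :=
  2 * m * ((n : ℝ) - 1) / (2 * (x ^ 2 + t ^ 2) ^ n + m * (x ^ 2 + t ^ 2))

/-- A Schwarzschild profile solution on the interval [t0, t*), with t* ∈ ℝ ∪ {+∞}
encoded as an `EReal`.  The functions `x'` and `x''` are the first and second
derivatives of the twice continuously differentiable positive function `x`,
which solves the profile ODE with the free-boundary initial conditions. -/
structure IsSchwarzschildProfile (n : ℕ) (m R0 t0 : ℝ) (tstar : EReal)
    (x x' x'' : ℝ → ℝ) : Prop where
  hasDeriv : ∀ t : ℝ, t0 ≤ t → (t : EReal) < tstar → HasDerivAt x (x' t) t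
  hasDeriv2 : ∀ t : ℝ, t0 ≤ t → (t : EReal) < tstar → HasDerivAt x' (x'' t) t
  cont2 : ContinuousOn x'' {t : ℝ | t0 ≤ t ∧ (t : EReal) < tstar}
  pos : ∀ t : ℝ, t0 ≤ t → (t : EReal) < tstar → 0 < x t
  ode : ∀ t : ℝ, t0 ≤ t → (t : EReal) < tstar →
    x'' t = ((t * x' t - x t) * schChi n m (x t) t + ((n : ℝ) - 2) / x t)
      * (1 + (x' t) ^ 2)
  init : x t0 = Real.sqrt (R0 ^ 2 - t0 ^ 2)
  initDeriv : t0 * x' t0 = x t0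

/-- for a Schwarzschild profile solution, Ψ(t) = t·x'(t) − x(t)
satisfies Ψ(t0) = 0, Ψ'(t) = t·x''(t) > 0 on (t0,t*) and Ψ ≥ 0 on [t0,t*);
consequently x'(t) ≥ x(t)/t > 0, so x is strictly increasing on [t0,t*). -/
theorem statement0 (n : ℕ) (hn : 3 ≤ n) (m R0 t0 : ℝ) (hm : 0 < m)
    (ht0 : 0 < t0) (htR : t0 < R0) (tstar : EReal) (hts : (t0 : EReal) < tstar)
    (x x' x'' : ℝ → ℝ) (hx : IsSchwarzschildProfile n m R0 t0 tstar x x' x'') :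
    (t0 * x' t0 - x t0 = 0) ∧
    (∀ t : ℝ, t0 < t → (t : EReal) < tstar →
      HasDerivAt (fun s => s * x' s - x s) (t * x'' t) t ∧ 0 < t * x'' t) ∧
    (∀ t : ℝ, t0 ≤ t → (t : EReal) < tstar → 0 ≤ t * x' t - x t) ∧
    (∀ t : ℝ, t0 ≤ t → (t : EReal) < tstar → x t / t ≤ x' t ∧ 0 < x t / t) ∧
    StrictMonoOn x {t : ℝ | t0 ≤ t ∧ (t : EReal) < tstar} := by

  obtain ⟨hd, hd2, hc2, hpos, hode, hinit, hinitd⟩ := hx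
  set ψ : ℝ → ℝ := fun s => s * x' s - x s with hψdef
  have hdom : ∀ ⦃a b : ℝ⦄, a ≤ b → (b : EReal) < tstar → (a : EReal) < tstar :=
    fun a b hab hb => lt_of_le_of_lt (EReal.coe_le_coe_iff.mpr hab) hb
  have hψd : ∀ t : ℝ, t0 ≤ t → (t : EReal) < tstar → HasDerivAt ψ (t * x'' t) t := by
    intro t h1 h2
    have h := ((hasDerivAt_id t).mul (hd2 t h1 h2)).sub (hd t h1 h2)
    refine HasDerivAt.congr_deriv (h : HasDerivAt ψ _ t) ?_
    simp only [id_eq]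
    ring
  have hψ0 : ψ t0 = 0 := sub_eq_zero.mpr hinitd
  have hn3 : (3 : ℝ) ≤ (n : ℝ) := by exact_mod_cast hn
  have hxpp : ∀ t : ℝ, t0 ≤ t → (t : EReal) < tstar → 0 ≤ ψ t → 0 < x'' t := by
    intro t h1 h2 hψt
    rw [hode t h1 h2]
    have hxt := hpos t h1 h2
    have hsum : 0 < x t ^ 2 + t ^ 2 := by positivity
    have hchi : 0 < schChi n m (x t) t := by
      unfold schChi
      apply div_pos
      · nlinarith
      · positivity
    have h2' : (0 : ℝ) < (n : ℝ) - 2 := by linarith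
    have hmain : 0 < (t * x' t - x t) * schChi n m (x t) t + ((n : ℝ) - 2) / x t := by
      have ha := mul_nonneg hψt hchi.le
      have hb := div_pos h2' hxt
      simp only [hψdef] at ha
      linarith
    have hsq : (0 : ℝ) < 1 + (x' t) ^ 2 := by positivity
    exact mul_pos hmain hsq
  have hψt0' : 0 < t0 * x'' t0 := mul_pos ht0 (hxpp t0 le_rfl hts hψ0.ge)
  have hev : ∀ᶠ s in nhdsWithin t0 (Set.Ioi t0), 0 < ψ s := by
    have hder := hψd t0 le_rfl hts
    have hslope := hasDerivAt_iff_tendsto_slope.mp hder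
    have h1 : ∀ᶠ s in nhdsWithin t0 {t0}ᶜ, 0 < slope ψ t0 s :=
      hslope (Ioi_mem_nhds hψt0')
    have h2 : ∀ᶠ s in nhdsWithin t0 (Set.Ioi t0), 0 < slope ψ t0 s :=
      h1.filter_mono (nhdsWithin_mono _ (fun s hs => ne_of_gt hs))
    have h3 : ∀ᶠ s in nhdsWithin t0 (Set.Ioi t0), s ∈ Set.Ioi t0 :=
      self_mem_nhdsWithin
    filter_upwards [h2, h3] with s hs1 hs2
    rw [slope_def_field, hψ0, sub_zero] at hs1
    have hst : 0 < s - t0 := sub_pos.mpr hs2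
    have := mul_pos hs1 hst
    rwa [div_mul_cancel₀ _ (ne_of_gt hst)] at this
  -- the key nonnegativity claim
  have key : ∀ t : ℝ, t0 ≤ t → (t : EReal) < tstar → 0 ≤ ψ t := by
    intro t1 ht1 ht1'
    by_contra hneg
    push_neg at hneg
    have ht01 : t0 < t1 := by
      rcases lt_or_eq_of_le ht1 with h | h
      · exact h
      · exfalso; rw [← h, hψ0] at hneg; exact lt_irrefl 0 hneg
    set S : Set ℝ := {s | s ∈ Set.Icc t0 t1 ∧ ψ s < 0} with hSdef
    have hSne : S.Nonempty := ⟨t1, ⟨ht1, le_refl t1⟩, hneg⟩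
    have hSbdd : BddBelow S := ⟨t0, fun s hs => hs.1.1⟩
    set T := sInf S with hTdef
    have hT0 : t0 ≤ T := le_csInf hSne (fun s hs => hs.1.1)
    have hTt1 : T ≤ t1 := csInf_le hSbdd ⟨⟨ht1, le_refl t1⟩, hneg⟩
    have hTdom : (T : EReal) < tstar := hdom hTt1 ht1'
    have hTcl : T ∈ closure S := csInf_mem_closure hSne hSbdd
    have hfreq : ∃ᶠ s in nhds T, s ∈ S := mem_closure_iff_frequently.mp hTcl
    have hnotS : ∀ s : ℝ, t0 ≤ s → s < T → 0 ≤ ψ s := by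
      intro s hs1 hs2
      by_contra hc
      push_neg at hc
      have : s ∈ S := ⟨⟨hs1, le_of_lt (lt_of_lt_of_le hs2 hTt1)⟩, hc⟩
      exact absurd (csInf_le hSbdd this) (not_le.mpr hs2)
    rcases lt_or_eq_of_le hT0 with hT0' | hT0'
    · -- t0 < T : use strict monotonicity on [t0, T]
      have hψT : ψ T ≤ 0 := by
        by_contra hc
        push_neg at hc
        have hcT : ContinuousAt ψ T := (hψd T hT0 hTdom).continuousAt
        have hev2 : ∀ᶠ s in nhds T, 0 < ψ s := hcT (Ioi_mem_nhds hc)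
        obtain ⟨s, hs1, hs2⟩ := (hfreq.and_eventually hev2).exists
        exact absurd hs2 (not_lt.mpr hs1.2.le)
      have hmono : StrictMonoOn ψ (Set.Icc t0 T) := by
        apply strictMonoOn_of_deriv_pos (convex_Icc t0 T)
        · intro s hs
          have hsd : (s : EReal) < tstar := hdom (le_trans hs.2 hTt1) ht1'
          exact ((hψd s hs.1 hsd).continuousAt).continuousWithinAt
        · intro s hs
          rw [interior_Icc] at hs
          have hsd : (s : EReal) < tstar := hdom (le_trans hs.2.le hTt1) ht1'
          have hψs : 0 ≤ ψ s := hnotS s hs.1.le hs.2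
          rw [(hψd s hs.1.le hsd).deriv]
          exact mul_pos (lt_trans ht0 hs.1) (hxpp s hs.1.le hsd hψs)
      have := hmono (Set.left_mem_Icc.mpr hT0) (Set.right_mem_Icc.mpr hT0) hT0'
      rw [hψ0] at this
      exact absurd hψT (not_le.mpr this)
    · -- T = t0 : contradict the eventual positivity just after t0
      have hfreq' : ∃ᶠ s in nhdsWithin t0 (Set.Ioi t0), s ∈ S := by
        rw [frequently_nhdsWithin_iff]
        rw [← hT0'] at hfreq
        refine hfreq.mono ?_
        intro s hs
        refine ⟨hs, ?_⟩
        have hsne : s ≠ t0 := by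
          intro h
          have h2 := hs.2
          rw [h, hψ0] at h2
          exact lt_irrefl 0 h2
        exact lt_of_le_of_ne hs.1.1 (Ne.symm hsne)
      obtain ⟨s, hs1, hs2⟩ := (hfreq'.and_eventually hev).exists
      exact absurd hs2 (not_lt.mpr hs1.2.le)
  -- assemble the conclusion
  have hx'pos : ∀ t : ℝ, t0 ≤ t → (t : EReal) < tstar → x t / t ≤ x' t ∧ 0 < x t / t := by
    intro t h1 h2
    have htp : 0 < t := lt_of_lt_of_le ht0 h1
    have hk := key t h1 h2
    constructor
    · rw [div_le_iff₀ htp]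
      simp only [hψdef] at hk
      nlinarith
    · exact div_pos (hpos t h1 h2) htp
  refine ⟨sub_eq_zero.mpr hinitd, ?_, ?_, hx'pos, ?_⟩
  · intro t h1 h2
    refine ⟨hψd t h1.le h2, mul_pos (lt_trans ht0 h1) (hxpp t h1.le h2 (key t h1.le h2))⟩
  · exact key
  · -- strict monotonicity of x
    set D : Set ℝ := {t : ℝ | t0 ≤ t ∧ (t : EReal) < tstar} with hDdef
    have hDconv : Convex ℝ D := by
      have : D.OrdConnected := by
        constructor
        intro a ha b hb z hz
        exact ⟨le_trans ha.1 hz.1, hdom hz.2 hb.2⟩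
      exact this.convex
    apply strictMonoOn_of_deriv_pos hDconv
    · intro s hs
      exact ((hd s hs.1 hs.2).continuousAt).continuousWithinAt
    · intro s hs
      have hs' : s ∈ D := interior_subset hs
      rw [(hd s hs'.1 hs'.2).deriv]
      have := hx'pos s hs'.1 hs'.2
      linarith [this.1, this.2]
end

section
/- Let x : [t0, +∞) → ℝ be a Schwarzschild profile solution defined on all of [t0, +∞) (for any integer n ≥ 3). Then x(t) → +∞ as t → +∞. -/
/-- a Schwarzschild profile solution defined on all of [t0, +∞)
satisfies x(t) → +∞ as t → +∞. -/
theorem statement2 (n : ℕ) (hn : 3 ≤ n) (m R0 t0 : ℝ) (hm : 0 < m)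
    (ht0 : 0 < t0) (htR : t0 < R0)
    (x x' x'' : ℝ → ℝ) (hx : IsSchwarzschildProfile n m R0 t0 ⊤ x x' x'') :
    Filter.Tendsto x Filter.atTop Filter.atTop := by
  have hn3 : (3 : ℝ) ≤ (n : ℝ) := by exact_mod_cast hn
  have hd : ∀ t, t0 ≤ t → HasDerivAt x (x' t) t :=
    fun t ht => hx.hasDeriv t ht (EReal.coe_lt_top t)
  have hd2 : ∀ t, t0 ≤ t → HasDerivAt x' (x'' t) t :=
    fun t ht => hx.hasDeriv2 t ht (EReal.coe_lt_top t)
  have hpos : ∀ t, t0 ≤ t → 0 < x t := fun t ht => hx.pos t ht (EReal.coe_lt_top t)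
  have hode : ∀ t, t0 ≤ t → x'' t
      = ((t * x' t - x t) * schChi n m (x t) t + ((n : ℝ) - 2) / x t) * (1 + (x' t) ^ 2) :=
    fun t ht => hx.ode t ht (EReal.coe_lt_top t)
  -- the auxiliary function h = t x' - x
  set h : ℝ → ℝ := fun t => t * x' t - x t with hhdef
  have hh0 : h t0 = 0 := by simp [hhdef, hx.initDeriv]
  have hdh : ∀ t, t0 ≤ t → HasDerivAt h (t * x'' t) t := by
    intro t ht
    have H := ((hasDerivAt_id t).mul (hd2 t ht)).sub (hd t ht)
    convert H using 1
    · rfl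
    · rfl
    · rfl
    simp [id]
  -- continuity facts on [t0, ∞)
  have cx : ContinuousOn x (Set.Ici t0) :=
    fun t ht => (hd t ht).continuousAt.continuousWithinAt
  have cx' : ContinuousOn x' (Set.Ici t0) :=
    fun t ht => (hd2 t ht).continuousAt.continuousWithinAt
  have ch : ContinuousOn h (Set.Ici t0) :=
    (continuousOn_id.mul cx').sub cx
  -- the denominator of chi
  set d : ℝ → ℝ := fun t => 2 * (x t ^ 2 + t ^ 2) ^ n + m * (x t ^ 2 + t ^ 2) with hddef
  have hqpos : ∀ t, t0 ≤ t → 0 < x t ^ 2 + t ^ 2 := by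
    intro t ht
    have := hpos t ht
    positivity
  have hdenpos : ∀ t, t0 ≤ t → 0 < d t := by
    intro t ht
    have hq := hqpos t ht
    simp only [hddef]
    positivity
  have cd : ContinuousOn d (Set.Ici t0) := by
    have cq : ContinuousOn (fun t => x t ^ 2 + t ^ 2) (Set.Ici t0) :=
      (cx.pow 2).add ((continuous_id.pow 2).continuousOn)
    exact (continuousOn_const.mul (cq.pow n)).add (continuousOn_const.mul cq)
  -- coefficient functions
  set a : ℝ → ℝ := fun t => t * (1 + x' t ^ 2) * (2 * m * ((n : ℝ) - 1) / d t) with hadef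
  set b : ℝ → ℝ := fun t => t * (1 + x' t ^ 2) * (((n : ℝ) - 2) / x t) with hbdef
  have hbpos : ∀ t, t0 ≤ t → 0 < b t := by
    intro t ht
    have h1 : 0 < t := lt_of_lt_of_le ht0 ht
    have h2 : 0 < x t := hpos t ht
    have h3 : (0:ℝ) < (n : ℝ) - 2 := by linarith
    have h4 : (0:ℝ) < 1 + x' t ^ 2 := by positivity
    exact mul_pos (mul_pos h1 h4) (div_pos h3 h2)
  have ca : ContinuousOn a (Set.Ici t0) := by
    exact (continuousOn_id.mul ((continuousOn_const.add (cx'.pow 2)))).mul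
      (continuousOn_const.div cd (fun t ht => (hdenpos t ht).ne'))
  have hab : ∀ t, t0 ≤ t → t * x'' t = a t * h t + b t := by
    intro t ht
    rw [hode t ht]
    simp only [hadef, hbdef, hhdef, schChi, hddef]
    ring
  -- Key claim: h ≥ 0 on [t0, ∞)
  have key : ∀ t, t0 ≤ t → 0 ≤ h t := by
    intro t1 ht1
    by_contra hneg
    push_neg at hneg
    -- bound on a over [t0, t1]
    obtain ⟨y, hy, hKmax⟩ := isCompact_Icc.exists_isMaxOn (by exact ⟨t0, le_refl t0, ht1⟩)
      (ca.mono Set.Icc_subset_Ici_self)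
    set K : ℝ := max (a y) 0 with hKdef
    have haK : ∀ t ∈ Set.Icc t0 t1, a t ≤ K :=
      fun t ht => le_trans (hKmax ht) (le_max_left _ _)
    -- the last time h is nonnegative
    set S : Set ℝ := Set.Icc t0 t1 ∩ h ⁻¹' (Set.Ici 0) with hSdef
    have hScl : IsClosed S :=
      (ch.mono Set.Icc_subset_Ici_self).preimage_isClosed_of_isClosed isClosed_Icc isClosed_Ici
    have hSne : S.Nonempty := ⟨t0, ⟨le_refl t0, ht1⟩, by simp [hh0]⟩
    have hSbdd : BddAbove S := ⟨t1, fun z hz => hz.1.2⟩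
    set s : ℝ := sSup S with hsdef
    have hsS : s ∈ S := hScl.csSup_mem hSne hSbdd
    have hst0 : t0 ≤ s := hsS.1.1
    have hst1 : s ≤ t1 := hsS.1.2
    have hhs : 0 ≤ h s := hsS.2
    have hslt : s < t1 := lt_of_le_of_ne hst1 (fun he => absurd hhs (by rw [he]; exact not_le.2 hneg))
    have hIoo_neg : ∀ t ∈ Set.Ioo s t1, h t < 0 := by
      intro t ht
      by_contra hc
      push_neg at hc
      have : t ∈ S := ⟨⟨le_trans hst0 ht.1.le, ht.2.le⟩, hc⟩
      exact absurd (le_csSup hSbdd this) (not_le.2 ht.1)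
    -- w = h · exp(-K t) is strictly increasing on [s, t1]
    have cw : ContinuousOn (fun t => h t * Real.exp (-K * t)) (Set.Icc s t1) := by
      refine ((ch.mono ?_).mul
        ((Real.continuous_exp.comp (continuous_const.mul continuous_id)).continuousOn))
      exact fun z hz => le_trans hst0 hz.1
    have hwmono : StrictMonoOn (fun t => h t * Real.exp (-K * t)) (Set.Icc s t1) := by
      apply strictMonoOn_of_deriv_pos (convex_Icc s t1) cw
      intro t ht
      rw [interior_Icc] at ht
      have ht0t : t0 ≤ t := le_trans hst0 ht.1.le
      have hexp : HasDerivAt (fun u : ℝ => Real.exp (-K * u)) (Real.exp (-K * t) * (-K)) t := by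
        have h1 : HasDerivAt (fun u : ℝ => -K * u) (-K) t := by
          simpa using (hasDerivAt_id t).const_mul (-K)
        exact (Real.hasDerivAt_exp (-K * t)).comp t h1
      have hw : HasDerivAt (fun t => h t * Real.exp (-K * t))
          ((t * x'' t) * Real.exp (-K * t) + h t * (Real.exp (-K * t) * (-K))) t :=
        (hdh t ht0t).mul hexp
      rw [hw.deriv]
      have hht : h t < 0 := hIoo_neg t ht
      have hat : a t ≤ K := haK t ⟨ht0t, ht.2.le⟩
      have hbt : 0 < b t := hbpos t ht0t
      have hepos : 0 < Real.exp (-K * t) := Real.exp_pos _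
      have h1 : 0 ≤ (K - a t) * (-h t) := mul_nonneg (by linarith) (by linarith)
      have heq : (t * x'' t) * Real.exp (-K * t) + h t * (Real.exp (-K * t) * (-K))
          = Real.exp (-K * t) * ((K - a t) * (-h t) + b t) := by
        rw [hab t ht0t]; ring
      rw [heq]
      exact mul_pos hepos (by linarith)
    have hlt := hwmono (Set.left_mem_Icc.2 hslt.le) (Set.right_mem_Icc.2 hslt.le) hslt
    simp only at hlt
    have hws : 0 ≤ h s * Real.exp (-K * s) := mul_nonneg hhs (Real.exp_pos _).le
    have hwt1 : h t1 * Real.exp (-K * t1) < 0 := mul_neg_of_neg_of_pos hneg (Real.exp_pos _)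
    linarith
  -- x t / t is monotone nondecreasing
  have mono : MonotoneOn (fun t => x t / t) (Set.Ici t0) := by
    have hder : ∀ t, t0 < t → HasDerivAt (fun u => x u / u) ((x' t * t - x t * 1) / t ^ 2) t := by
      intro t ht
      exact (hd t ht.le).div (hasDerivAt_id t) (by exact (lt_of_lt_of_le ht0 ht.le).ne')
    apply monotoneOn_of_deriv_nonneg (convex_Ici t0)
    · exact cx.div continuousOn_id (fun t ht => (lt_of_lt_of_le ht0 ht).ne')
    · intro t ht
      rw [interior_Ici] at ht
      exact (hder t ht).differentiableAt.differentiableWithinAt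
    · intro t ht
      rw [interior_Ici] at ht
      rw [(hder t ht).deriv]
      have hk := key t ht.le
      have hnum : 0 ≤ x' t * t - x t * 1 := by simp only [hhdef] at hk; linarith
      positivity
  -- conclude
  have c0 : 0 < x t0 / t0 := div_pos (hpos t0 le_rfl) ht0
  have hbound : ∀ t, t0 ≤ t → (x t0 / t0) * t ≤ x t := by
    intro t ht
    have htp : 0 < t := lt_of_lt_of_le ht0 ht
    have hm' := mono (Set.self_mem_Ici) ht ht
    calc (x t0 / t0) * t ≤ (x t / t) * t := mul_le_mul_of_nonneg_right hm' htp.le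
      _ = x t := div_mul_cancel₀ _ htp.ne'
  apply Filter.tendsto_atTop_mono' Filter.atTop
    (Filter.eventually_atTop.2 ⟨t0, hbound⟩)
  exact Filter.Tendsto.const_mul_atTop c0 Filter.tendsto_id
end

section
/- Let n = 3 and let x : [t0, t*) → ℝ be a Schwarzschild profile solution. Then for all t ∈ [t0, t*) one has x''(t) ≤ [x'(t)·a/x(t)⁴ + 1/x(t)]·(1 + x'(t)²), where a = max{2m/3, 2m/(3·t0²)}. -/
lemma schChi_three (m x t : ℝ) :
    schChi 3 m x t = 4 * m / (2 * (x ^ 2 + t ^ 2) ^ 3 + m * (x ^ 2 + t ^ 2)) := by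
  unfold schChi; norm_num; ring

lemma schChi_pos (m x t : ℝ) (hm : 0 < m) (hρ : 0 < x ^ 2 + t ^ 2) :
    0 < schChi 3 m x t := by
  rw [schChi_three]
  have h3 : 0 < (x ^ 2 + t ^ 2) ^ 3 := pow_pos hρ 3
  exact div_pos (by linarith) (by nlinarith)

lemma poly_key (t x : ℝ) : 9 * t ^ 2 * x ^ 8 ≤ (x ^ 2 + t ^ 2) ^ 5 := by
  nlinarith [mul_nonneg (pow_nonneg (sq_nonneg x) 3) (sq_nonneg (x ^ 2 - 2 * t ^ 2)),
    pow_nonneg (sq_nonneg t) 5,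
    mul_nonneg (pow_nonneg (sq_nonneg x) 3) (pow_nonneg (sq_nonneg t) 2),
    mul_nonneg (pow_nonneg (sq_nonneg x) 2) (pow_nonneg (sq_nonneg t) 3),
    mul_nonneg (sq_nonneg x) (pow_nonneg (sq_nonneg t) 4)]

lemma chi_bound (m t0 t x : ℝ) (hm : 0 < m) (ht0 : 0 < t0) (ht : t0 ≤ t) (hx : 0 < x) :
    t * schChi 3 m x t ≤ max (2 * m / 3) (2 * m / (3 * t0 ^ 2)) / x ^ 4 := by
  set a := max (2 * m / 3) (2 * m / (3 * t0 ^ 2)) with ha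
  have hρ : 0 < x ^ 2 + t ^ 2 := by positivity
  have hρ3 : 0 < (x ^ 2 + t ^ 2) ^ 3 := pow_pos hρ 3
  have hD : 0 < 2 * (x ^ 2 + t ^ 2) ^ 3 + m * (x ^ 2 + t ^ 2) := by nlinarith
  have hx4 : 0 < x ^ 4 := by positivity
  have ht' : 0 < t := lt_of_lt_of_le ht0 ht
  have ha1 : 2 * m / (3 * t0) ≤ a := by
    rcases le_total t0 1 with h | h
    · refine le_trans ?_ (le_max_right _ _)
      rw [div_le_div_iff₀ (by positivity) (by positivity)]
      nlinarith [mul_nonneg (mul_pos hm ht0).le (sub_nonneg.2 h)]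
    · refine le_trans ?_ (le_max_left _ _)
      rw [div_le_div_iff₀ (by positivity) (by norm_num)]
      nlinarith [mul_nonneg hm.le (sub_nonneg.2 h)]
  have hc : 0 < 2 * m / (3 * t0) := by positivity
  have hanneg : 0 ≤ a := le_trans hc.le ha1
  have ht0ρ : t0 ^ 2 ≤ x ^ 2 + t ^ 2 := by nlinarith
  have hA : 0 ≤ 3 * t0 * (t * x ^ 4) := by positivity
  have hsq : (3 * t0 * (t * x ^ 4)) ^ 2 ≤ ((x ^ 2 + t ^ 2) ^ 3) ^ 2 := by
    nlinarith [mul_nonneg (sub_nonneg.2 ht0ρ) (pow_nonneg hρ.le 5),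
      mul_nonneg (sq_nonneg t0) (sub_nonneg.2 (poly_key t x))]
  have h3 : 3 * t0 * (t * x ^ 4) ≤ (x ^ 2 + t ^ 2) ^ 3 := by
    nlinarith [hsq, hA, hρ3]
  have hmain : 4 * m * (t * x ^ 4) ≤ a * (2 * (x ^ 2 + t ^ 2) ^ 3 + m * (x ^ 2 + t ^ 2)) := by
    have h4 : (2 * m / (3 * t0)) * (3 * t0 * (t * x ^ 4)) ≤ a * (x ^ 2 + t ^ 2) ^ 3 :=
      mul_le_mul ha1 h3 hA hanneg
    have h5 : (2 * m / (3 * t0)) * (3 * t0 * (t * x ^ 4)) = 2 * m * (t * x ^ 4) := by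
      field_simp
    nlinarith [mul_nonneg hanneg (mul_nonneg hm.le hρ.le)]
  rw [schChi_three]
  have heq : t * (4 * m / (2 * (x ^ 2 + t ^ 2) ^ 3 + m * (x ^ 2 + t ^ 2)))
      = 4 * m * t / (2 * (x ^ 2 + t ^ 2) ^ 3 + m * (x ^ 2 + t ^ 2)) := by ring
  rw [heq, div_le_div_iff₀ hD hx4]
  nlinarith [hmain]

/-- for n = 3, a Schwarzschild profile solution satisfies the
autonomous bound x'' ≤ [x'·a/x⁴ + 1/x]·(1 + x'²) with
a = max{2m/3, 2m/(3t0²)}. -/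
theorem statement4 (m R0 t0 : ℝ) (hm : 0 < m) (ht0 : 0 < t0) (htR : t0 < R0)
    (tstar : EReal) (hts : (t0 : EReal) < tstar)
    (x x' x'' : ℝ → ℝ) (hx : IsSchwarzschildProfile 3 m R0 t0 tstar x x' x'') :
    ∀ t : ℝ, t0 ≤ t → (t : EReal) < tstar →
      x'' t ≤ (x' t * (max (2 * m / 3) (2 * m / (3 * t0 ^ 2))) / (x t) ^ 4
        + 1 / x t) * (1 + (x' t) ^ 2) := by
  obtain ⟨hd1, hd2, -, hpos, hode, -, hinitD⟩ := hx
  set ψ : ℝ → ℝ := fun s => s * x' s - x s with hψdef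
  have hψval : ∀ s, ψ s = s * x' s - x s := fun s => rfl
  have hψd : ∀ t : ℝ, t0 ≤ t → (t : EReal) < tstar → HasDerivAt ψ (t * x'' t) t := by
    intro t h1 h2
    have h := ((hasDerivAt_id t).mul (hd2 t h1 h2)).sub (hd1 t h1 h2)
    refine HasDerivAt.congr_deriv (f := ψ) h ?_
    simp only [id_eq]
    ring
  have hx''pos : ∀ t : ℝ, t0 ≤ t → (t : EReal) < tstar → 0 ≤ ψ t → 0 < x'' t := by
    intro t h1 h2 hψ
    have hxp := hpos t h1 h2
    have ht' : 0 < t := lt_of_lt_of_le ht0 h1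
    have hchi := schChi_pos m (x t) t hm (by positivity)
    rw [hode t h1 h2]
    have h32 : ((3 : ℕ) : ℝ) - 2 = 1 := by norm_num
    apply mul_pos
    · rw [hψval] at hψ
      have h1' : 0 ≤ (t * x' t - x t) * schChi 3 m (x t) t := mul_nonneg hψ hchi.le
      have h2' : 0 < (((3 : ℕ) : ℝ) - 2) / x t := by rw [h32]; positivity
      linarith
    · positivity
  have key : ∀ t : ℝ, t0 ≤ t → (t : EReal) < tstar → 0 ≤ ψ t := by
    intro t1 h1 h2
    by_contra hneg
    push_neg at hneg
    set S : Set ℝ := {s : ℝ | s ∈ Set.Icc t0 t1 ∧ 0 ≤ ψ s} with hS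
    have hS0 : t0 ∈ S := ⟨⟨le_refl _, h1⟩, by rw [hψval, hinitD]; simp⟩
    have hSne : S.Nonempty := ⟨t0, hS0⟩
    have hSb : BddAbove S := ⟨t1, fun s hs => hs.1.2⟩
    set T := sSup S with hT
    have hTt0 : t0 ≤ T := le_csSup hSb hS0
    have hTt1 : T ≤ t1 := csSup_le hSne (fun s hs => hs.1.2)
    have hT2 : (T : EReal) < tstar :=
      lt_of_le_of_lt (EReal.coe_le_coe_iff.mpr hTt1) h2
    have hcont : ContinuousAt ψ T := (hψd T hTt0 hT2).continuousAt
    have hclos : T ∈ closure S := csSup_mem_closure hSne hSb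
    haveI : (nhdsWithin T S).NeBot := mem_closure_iff_nhdsWithin_neBot.mp hclos
    have hψT : 0 ≤ ψ T :=
      ge_of_tendsto (hcont.continuousWithinAt (s := S))
        (Filter.eventually_of_mem self_mem_nhdsWithin fun s hs => hs.2)
    have hTlt : T < t1 := by
      rcases lt_or_eq_of_le hTt1 with h | h
      · exact h
      · exfalso; rw [h] at hψT; linarith
    have hder : 0 < T * x'' T :=
      mul_pos (lt_of_lt_of_le ht0 hTt0) (hx''pos T hTt0 hT2 hψT)
    have hslope := hasDerivAt_iff_tendsto_slope.mp (hψd T hTt0 hT2)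
    have hev1 : ∀ᶠ s in nhdsWithin T (Set.Ioi T), 0 < slope ψ T s := by
      have hmono : nhdsWithin T (Set.Ioi T) ≤ nhdsWithin T {T}ᶜ :=
        nhdsWithin_mono T (fun y hy => ne_of_gt hy)
      exact (hslope.mono_left hmono).eventually (eventually_gt_nhds hder)
    have hev2 : ∀ᶠ s in nhdsWithin T (Set.Ioi T), s < t1 :=
      Filter.eventually_of_mem (Ioo_mem_nhdsGT_of_mem ⟨le_refl T, hTlt⟩) fun s hs => hs.2
    have hev3 : ∀ᶠ s in nhdsWithin T (Set.Ioi T), s ∈ Set.Ioi T := self_mem_nhdsWithin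
    obtain ⟨s, hs1, hs2, hs3⟩ := (hev1.and (hev2.and hev3)).exists
    have hsT : T < s := hs3
    have hst : 0 < s - T := sub_pos.2 hsT
    have hψs : 0 < ψ s - ψ T := by
      have h := hs1
      rw [slope_def_field] at h
      have h2 := mul_pos h hst
      rwa [div_mul_cancel₀ _ (ne_of_gt hst)] at h2
    have hsS : s ∈ S := ⟨⟨le_trans hTt0 hsT.le, hs2.le⟩, by linarith⟩
    have : s ≤ T := le_csSup hSb hsS
    linarith
  intro t h1 h2
  have hψ := key t h1 h2
  rw [hψval] at hψ
  have hxp := hpos t h1 h2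
  have ht' : 0 < t := lt_of_lt_of_le ht0 h1
  have hchi := schChi_pos m (x t) t hm (by positivity)
  have hx' : 0 ≤ x' t := by nlinarith
  have hcb := chi_bound m t0 t (x t) hm ht0 h1 hxp
  rw [hode t h1 h2]
  apply mul_le_mul_of_nonneg_right _ (by positivity)
  have h32 : ((3 : ℕ) : ℝ) - 2 = 1 := by norm_num
  rw [h32]
  have step1 : (t * x' t - x t) * schChi 3 m (x t) t ≤ (t * x' t) * schChi 3 m (x t) t :=
    mul_le_mul_of_nonneg_right (by linarith) hchi.le
  have step2 : (t * x' t) * schChi 3 m (x t) t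
      ≤ x' t * (max (2 * m / 3) (2 * m / (3 * t0 ^ 2)) / x t ^ 4) := by
    calc (t * x' t) * schChi 3 m (x t) t = x' t * (t * schChi 3 m (x t) t) := by ring
    _ ≤ _ := mul_le_mul_of_nonneg_left hcb hx'
  have heq : x' t * (max (2 * m / 3) (2 * m / (3 * t0 ^ 2)) / x t ^ 4)
      = x' t * max (2 * m / 3) (2 * m / (3 * t0 ^ 2)) / x t ^ 4 := by ring
  linarith [step1, step2]
end

section
/- Let x : [t0, t*) → ℝ be a Schwarzschild profile solution (for any integer n ≥ 3). Then for all t ∈ [t0, t*) one has x''(t) ≥ (n−2)·(1 + x'(t)²)/x(t). -/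
/-- a Schwarzschild profile solution satisfies
x''(t) ≥ (n−2)·(1 + x'(t)²)/x(t) on its interval of definition. -/
theorem statement5 (n : ℕ) (hn : 3 ≤ n) (m R0 t0 : ℝ) (hm : 0 < m)
    (ht0 : 0 < t0) (htR : t0 < R0) (tstar : EReal) (hts : (t0 : EReal) < tstar)
    (x x' x'' : ℝ → ℝ) (hx : IsSchwarzschildProfile n m R0 t0 tstar x x' x'') :
    ∀ t : ℝ, t0 ≤ t → (t : EReal) < tstar →
      ((n : ℝ) - 2) * (1 + (x' t) ^ 2) / x t ≤ x'' t := by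
  obtain ⟨hD1, hD2, hC, hpos, hode, hinit, hid⟩ := hx
  set u : ℝ → ℝ := fun t => t * x' t - x t with hu
  have hn3 : (3 : ℝ) ≤ (n : ℝ) := by exact_mod_cast hn
  have hchi : ∀ t : ℝ, t0 ≤ t → (t : EReal) < tstar → 0 < schChi n m (x t) t := by
    intro t h1 h2
    have hxp := hpos t h1 h2
    have hb : 0 < (x t) ^ 2 + t ^ 2 := by positivity
    have hden : 0 < 2 * ((x t) ^ 2 + t ^ 2) ^ n + m * ((x t) ^ 2 + t ^ 2) := by positivity
    have hnum : 0 < 2 * m * ((n : ℝ) - 1) := by nlinarith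
    exact div_pos hnum hden
  have hx''pos : ∀ t : ℝ, t0 ≤ t → (t : EReal) < tstar → 0 ≤ u t → 0 < x'' t := by
    intro t h1 h2 h3
    rw [hode t h1 h2]
    have hxp := hpos t h1 h2
    have hc := hchi t h1 h2
    have hn2 : 0 < (n : ℝ) - 2 := by linarith
    have h4 : 0 < ((n : ℝ) - 2) / x t := div_pos hn2 hxp
    have h5 : 0 ≤ (t * x' t - x t) * schChi n m (x t) t := mul_nonneg h3 hc.le
    have h6 : 0 < (t * x' t - x t) * schChi n m (x t) t + ((n : ℝ) - 2) / x t := by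
      linarith
    exact mul_pos h6 (by positivity)
  have hu' : ∀ t : ℝ, t0 ≤ t → (t : EReal) < tstar → HasDerivAt u (t * x'' t) t := by
    intro t h1 h2
    have h3 := ((hasDerivAt_id t).mul (hD2 t h1 h2)).sub (hD1 t h1 h2)
    refine h3.congr_deriv ?_
    simp only [id_eq]; ring
  have hslope : ∀ t : ℝ, t0 ≤ t → (t : EReal) < tstar → 0 ≤ u t →
      ∀ᶠ s in nhdsWithin t {t}ᶜ, 0 < slope u t s := by
    intro t h1 h2 h3
    have hd := hasDerivAt_iff_tendsto_slope.mp (hu' t h1 h2)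
    have hpos' : 0 < t * x'' t := mul_pos (lt_of_lt_of_le ht0 h1) (hx''pos t h1 h2 h3)
    exact hd.eventually (eventually_gt_nhds hpos')
  have hu0 : u t0 = 0 := by simp only [hu]; linarith [hid]
  have hunn : ∀ t : ℝ, t0 ≤ t → (t : EReal) < tstar → 0 ≤ u t := by
    by_contra hcon
    push_neg at hcon
    obtain ⟨s, hs1, hs2, hs3⟩ := hcon
    set S : Set ℝ := {t | t0 ≤ t ∧ (t : EReal) < tstar ∧ u t < 0} with hS
    have hSne : S.Nonempty := ⟨s, hs1, hs2, hs3⟩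
    have hSbd : BddBelow S := ⟨t0, fun y hy => hy.1⟩
    set t1 := sInf S with ht1
    have ht1s : t1 ≤ s := csInf_le hSbd ⟨hs1, hs2, hs3⟩
    have ht1lo : t0 ≤ t1 := le_csInf hSne fun y hy => hy.1
    have ht1star : (t1 : EReal) < tstar :=
      lt_of_le_of_lt (EReal.coe_le_coe_iff.mpr ht1s) hs2
    have hcontu : ContinuousAt u t1 := (hu' t1 ht1lo ht1star).continuousAt
    obtain ⟨f, -, hftend, hfS⟩ := exists_seq_tendsto_sInf hSne hSbd
    have hule : u t1 ≤ 0 := by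
      have hT := hcontu.tendsto.comp hftend
      exact le_of_tendsto hT (Filter.Eventually.of_forall fun k => (hfS k).2.2.le)
    have ht01 : t0 < t1 := by
      rcases lt_or_eq_of_le ht1lo with h | h
      · exact h
      · exfalso
        have hev := hslope t0 le_rfl hts hu0.ge
        have hev' : ∀ᶠ ss in nhdsWithin t0 (Set.Ioi t0), 0 < u ss := by
          have hmono : nhdsWithin t0 (Set.Ioi t0) ≤ nhdsWithin t0 {t0}ᶜ :=
            nhdsWithin_mono _ fun y hy => ne_of_gt hy
          filter_upwards [hmono hev, self_mem_nhdsWithin] with ss hsl hmem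
          have h2 : (t0 : ℝ) < ss := hmem
          rw [slope_def_field] at hsl
          have h3 : 0 < ss - t0 := sub_pos.mpr h2
          have h4 : 0 < u ss - u t0 := by
            have := mul_pos hsl h3
            rwa [div_mul_cancel₀ _ (ne_of_gt h3)] at this
          linarith [hu0]
        have hfgt : ∀ k, t0 < f k := by
          intro k
          refine (hfS k).1.lt_of_ne fun he => ?_
          have hneg := (hfS k).2.2
          rw [← he, hu0] at hneg
          exact lt_irrefl 0 hneg
        have hftend0 : Filter.Tendsto f Filter.atTop (nhds t0) := by rwa [h]
        have htin : Filter.Tendsto f Filter.atTop (nhdsWithin t0 (Set.Ioi t0)) :=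
          tendsto_nhdsWithin_of_tendsto_nhds_of_eventually_within f hftend0
            (Filter.Eventually.of_forall hfgt)
        obtain ⟨k, hk⟩ := (htin.eventually hev').exists
        exact absurd (hfS k).2.2 (not_lt.mpr hk.le)
    have hnonneg : ∀ ss : ℝ, t0 ≤ ss → ss < t1 → 0 ≤ u ss := by
      intro ss h1 h2
      by_contra h3
      push_neg at h3
      have hss : ss ∈ S :=
        ⟨h1, lt_trans (EReal.coe_lt_coe_iff.mpr h2) ht1star, h3⟩
      exact absurd (csInf_le hSbd hss) (not_le.mpr h2)
    have huge : 0 ≤ u t1 := by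
      have htend : Filter.Tendsto u (nhdsWithin t1 (Set.Iio t1)) (nhds (u t1)) :=
        hcontu.continuousWithinAt.tendsto
      refine ge_of_tendsto htend ?_
      filter_upwards [Ioo_mem_nhdsLT_of_mem
        (show t1 ∈ Set.Ioc t0 t1 from ⟨ht01, le_rfl⟩)] with ss hss
      exact hnonneg ss hss.1.le hss.2
    have hut1 : u t1 = 0 := le_antisymm hule huge
    have hev := hslope t1 ht1lo ht1star huge
    have hev2 : ∀ᶠ ss in nhdsWithin t1 (Set.Iio t1), 0 < slope u t1 ss := by
      have hmono : nhdsWithin t1 (Set.Iio t1) ≤ nhdsWithin t1 {t1}ᶜ :=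
        nhdsWithin_mono _ fun y hy => ne_of_lt hy
      exact hmono hev
    have hmem := Ioo_mem_nhdsLT_of_mem (show t1 ∈ Set.Ioc t0 t1 from ⟨ht01, le_rfl⟩)
    obtain ⟨ss, hsl, hss⟩ := (hev2.and (Filter.eventually_of_mem hmem fun y hy => hy)).exists
    rw [slope_def_field] at hsl
    have h3 : ss - t1 < 0 := sub_neg.mpr hss.2
    rcases div_pos_iff.mp hsl with ⟨_, hd⟩ | ⟨hnum, _⟩
    · linarith
    · have : u ss < 0 := by rw [hut1] at hnum; linarith
      exact absurd (hnonneg ss hss.1.le hss.2) (not_le.mpr this)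
  intro t h1 h2
  have hxp := hpos t h1 h2
  have hun : 0 ≤ t * x' t - x t := hunn t h1 h2
  rw [hode t h1 h2]
  have hc := hchi t h1 h2
  have h5 : 0 ≤ (t * x' t - x t) * schChi n m (x t) t := mul_nonneg hun hc.le
  have heq : ((n : ℝ) - 2) * (1 + (x' t) ^ 2) / x t
      = (((n : ℝ) - 2) / x t) * (1 + (x' t) ^ 2) := by ring
  rw [heq]
  have h6 : 0 ≤ ((t * x' t - x t) * schChi n m (x t) t) * (1 + (x' t) ^ 2) :=
    mul_nonneg h5 (by positivity)
  nlinarith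
end

section
/- Let n ≥ 3 be an integer and 0 < t0 < R0 real numbers. Let u : [t0, t*) → ℝ be twice continuously differentiable with u(t) > 0, satisfying u''(t) = (n−2)·(1 + u'(t)²)/u(t) on [t0, t*) with u(t0) = √(R0² − t0²) and t0·u'(t0) = u(t0). Then u'(t) > 0 for all t ∈ [t0, t*), and for every t ∈ [t0, t*) one has t = t0 + ∫_{√(R0²−t0²)}^{u(t)} dμ/√((R0/t0)²·(μ/√(R0²−t0²))^{2(n−2)} − 1). -/
/-- the solution of the comparison ODE u'' = (n−2)(1 + u'²)/u with
free-boundary initial conditions u(t0) = √(R0² − t0²), t0·u'(t0) = u(t0) has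
u' > 0 and satisfies the implicit formula
t = t0 + ∫_{√(R0²−t0²)}^{u(t)} dμ/√((R0/t0)²(μ/√(R0²−t0²))^{2(n−2)} − 1). -/
theorem statement7 (n : ℕ) (hn : 3 ≤ n) (R0 t0 : ℝ) (ht0 : 0 < t0)
    (htR : t0 < R0) (tstar : EReal) (hts : (t0 : EReal) < tstar)
    (u u' u'' : ℝ → ℝ)
    (hu1 : ∀ t : ℝ, t0 ≤ t → (t : EReal) < tstar → HasDerivAt u (u' t) t)
    (hu2 : ∀ t : ℝ, t0 ≤ t → (t : EReal) < tstar → HasDerivAt u' (u'' t) t)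
    (hu2c : ContinuousOn u'' {t : ℝ | t0 ≤ t ∧ (t : EReal) < tstar})
    (hupos : ∀ t : ℝ, t0 ≤ t → (t : EReal) < tstar → 0 < u t)
    (hode : ∀ t : ℝ, t0 ≤ t → (t : EReal) < tstar →
      u'' t = ((n : ℝ) - 2) * (1 + (u' t) ^ 2) / u t)
    (hinit : u t0 = Real.sqrt (R0 ^ 2 - t0 ^ 2))
    (hinit' : t0 * u' t0 = u t0) :
    ∀ t : ℝ, t0 ≤ t → (t : EReal) < tstar →
      0 < u' t ∧
      t = t0 + ∫ μ in (Real.sqrt (R0 ^ 2 - t0 ^ 2))..(u t),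
        1 / Real.sqrt ((R0 / t0) ^ 2
          * (μ / Real.sqrt (R0 ^ 2 - t0 ^ 2)) ^ (2 * (n - 2)) - 1) := by
  have hR0 : 0 < R0 := ht0.trans htR
  have hdiff : 0 < R0 ^ 2 - t0 ^ 2 := by nlinarith
  set u0 : ℝ := Real.sqrt (R0 ^ 2 - t0 ^ 2) with hu0def
  have hu0 : 0 < u0 := Real.sqrt_pos.mpr hdiff
  have hu0sq : u0 ^ 2 = R0 ^ 2 - t0 ^ 2 := Real.sq_sqrt hdiff.le
  set e : ℕ := 2 * (n - 2) with hedef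
  obtain ⟨k, hk⟩ : ∃ k, e = k + 1 := ⟨2 * (n - 2) - 1, by omega⟩
  have hce : (e : ℝ) = 2 * ((n : ℝ) - 2) := by
    have h2 : (2 : ℕ) ≤ n := by omega
    rw [hedef]
    push_cast [Nat.cast_sub h2]
    ring
  have hn2 : (0 : ℝ) < (n : ℝ) - 2 := by
    have : (3 : ℝ) ≤ (n : ℝ) := by exact_mod_cast hn
    linarith
  set K : ℝ := (R0 / t0) ^ 2 / u0 ^ e with hKdef
  -- domain transfer
  have hdom : ∀ x t : ℝ, x ≤ t → (t : EReal) < tstar → (x : EReal) < tstar := by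
    intro x t hxt htlt
    exact lt_of_le_of_lt (EReal.coe_le_coe_iff.mpr hxt) htlt
  -- initial slope
  have hu't0 : u' t0 = u0 / t0 := by
    rw [← hinit, ← hinit']
    field_simp
  have hu't0pos : 0 < u' t0 := by
    rw [hu't0]; positivity
  -- u' > 0 throughout
  have hpos : ∀ x : ℝ, t0 ≤ x → (x : EReal) < tstar → 0 < u' x := by
    intro x hx hxlt
    rcases eq_or_lt_of_le hx with rfl | hlt
    · exact hu't0pos
    · have hmono : StrictMonoOn u' (Set.Icc t0 x) := by
        apply strictMonoOn_of_deriv_pos (convex_Icc _ _)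
        · intro y hy
          exact ((hu2 y hy.1 (hdom y x hy.2 hxlt)).continuousAt).continuousWithinAt
        · intro y hy
          rw [interior_Icc] at hy
          have hyd : (y : EReal) < tstar := hdom y x hy.2.le hxlt
          rw [(hu2 y hy.1.le hyd).deriv, hode y hy.1.le hyd]
          have hupy := hupos y hy.1.le hyd
          have : (0:ℝ) < 1 + u' y ^ 2 := by positivity
          exact div_pos (mul_pos hn2 this) hupy
      have := hmono (Set.left_mem_Icc.mpr hx) (Set.right_mem_Icc.mpr hx) hlt
      linarith
  -- first integral: (1 + u'^2)/u^e is constant = K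
  have hginv : ∀ t : ℝ, t0 ≤ t → (t : EReal) < tstar →
      1 + (u' t) ^ 2 = K * (u t) ^ e := by
    intro t ht htlt
    have key := constant_of_has_deriv_right_zero
      (f := fun s => (1 + (u' s) ^ 2) / (u s) ^ e) (a := t0) (b := t)
      ?_ ?_ t (Set.right_mem_Icc.mpr ht)
    · -- deduce from g t = g t0
      have hgt0 : (1 + (u' t0) ^ 2) / (u t0) ^ e = K := by
        rw [hu't0, hinit]
        have h1 : 1 + (u0 / t0) ^ 2 = (R0 / t0) ^ 2 := by
          field_simp
          nlinarith
        rw [h1]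
      have hne : (u t) ^ e ≠ 0 := pow_ne_zero _ (hupos t ht htlt).ne'
      have key2 : (1 + (u' t) ^ 2) / (u t) ^ e = (1 + (u' t0) ^ 2) / (u t0) ^ e := key
      rw [hgt0, div_eq_iff hne] at key2
      exact key2
    · -- continuity
      intro y hy
      have hyd : (y : EReal) < tstar := hdom y t hy.2 htlt
      have h1 := (hu1 y hy.1 hyd).continuousAt
      have h2 := (hu2 y hy.1 hyd).continuousAt
      have hne : (u y) ^ e ≠ 0 := pow_ne_zero _ (hupos y hy.1 hyd).ne'
      exact (ContinuousAt.div (by fun_prop) (h1.pow e) hne).continuousWithinAt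
    · -- zero derivative
      intro x hx
      have hxd : (x : EReal) < tstar := hdom x t hx.2.le htlt
      have hu := hupos x hx.1 hxd
      have h1 := hu1 x hx.1 hxd
      have h2 := hu2 x hx.1 hxd
      have hne : u x ^ e ≠ 0 := pow_ne_zero _ hu.ne'
      have hpow : HasDerivAt (fun s => u s ^ e) ((e : ℝ) * u x ^ (e - 1) * u' x) x :=
        h1.pow e
      have hinv := hpow.inv hne
      have hsq : HasDerivAt (fun s => 1 + (u' s) ^ 2) ((2 : ℝ) * u' x ^ 1 * u'' x) x := by
        simpa using ((h2.pow 2).const_add (1 : ℝ))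
      have hmul := hsq.mul hinv
      have hzero : (2 : ℝ) * u' x ^ 1 * u'' x * (u x ^ e)⁻¹
          + (1 + u' x ^ 2) * (-((e : ℝ) * u x ^ (e - 1) * u' x) / (u x ^ e) ^ 2) = 0 := by
        rw [hode x hx.1 hxd]
        have h3 : e - 1 = k := by omega
        have hkc : ((k : ℝ) + 1) = 2 * ((n : ℝ) - 2) := by
          rw [← hce, hk]; push_cast; ring
        rw [h3, hk]
        push_cast
        rw [hkc]
        have hne2 : u x ≠ 0 := hu.ne'
        field_simp
        ring
      rw [Pi.inv_apply, hzero] at hmul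
      exact hmul.hasDerivWithinAt
  -- sqrt relation
  have hrel : ∀ x : ℝ, t0 ≤ x → (x : EReal) < tstar →
      Real.sqrt (K * (u x) ^ e - 1) = u' x := by
    intro x hx hxlt
    have h := hginv x hx hxlt
    have : K * (u x) ^ e - 1 = (u' x) ^ 2 := by linarith
    rw [this]
    exact Real.sqrt_sq (hpos x hx hxlt).le
  intro t ht htlt
  refine ⟨hpos t ht htlt, ?_⟩
  have hIcc : Set.uIcc t0 t = Set.Icc t0 t := Set.uIcc_of_le ht
  -- rewrite integrand
  have hfun : ∀ μ : ℝ, (R0 / t0) ^ 2 * (μ / u0) ^ e - 1 = K * μ ^ e - 1 := by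
    intro μ
    rw [hKdef, div_pow]
    ring
  have hint : (∫ μ in u0..(u t), 1 / Real.sqrt ((R0 / t0) ^ 2 * (μ / u0) ^ e - 1))
      = ∫ μ in u0..(u t), 1 / Real.sqrt (K * μ ^ e - 1) := by
    simp only [hfun]
  -- substitution
  have hsub := intervalIntegral.integral_comp_smul_deriv' (a := t0) (b := t)
    (f := u) (f' := u') (g := fun μ => 1 / Real.sqrt (K * μ ^ e - 1))
    ?_ ?_ ?_
  · -- LHS equals t - t0
    have hone : (∫ x in t0..t, u' x • ((fun μ => 1 / Real.sqrt (K * μ ^ e - 1)) ∘ u) x)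
        = t - t0 := by
      rw [intervalIntegral.integral_congr (g := fun _ => (1 : ℝ)) ?_]
      · simp
      · intro x hx
        rw [hIcc] at hx
        have hxd : (x : EReal) < tstar := hdom x t hx.2 htlt
        have hr := hrel x hx.1 hxd
        have hp := hpos x hx.1 hxd
        simp only [Function.comp_apply, smul_eq_mul]
        rw [hr]
        field_simp
    rw [hone] at hsub
    rw [hinit] at hsub
    rw [hint, ← hsub]
    ring
  · intro x hx
    rw [hIcc] at hx
    exact hu1 x hx.1 (hdom x t hx.2 htlt)
  · intro x hx
    rw [hIcc] at hx
    exact ((hu2 x hx.1 (hdom x t hx.2 htlt)).continuousAt).continuousWithinAt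
  · -- continuity of g on image
    intro y hy
    obtain ⟨x, hx, rfl⟩ := hy
    rw [hIcc] at hx
    have hxd : (x : EReal) < tstar := hdom x t hx.2 htlt
    have hr := hrel x hx.1 hxd
    have hp := hpos x hx.1 hxd
    have hnz : Real.sqrt (K * (u x) ^ e - 1) ≠ 0 := by rw [hr]; exact hp.ne'
    apply ContinuousWithinAt.div continuousWithinAt_const
    · exact (Real.continuous_sqrt.comp
        ((continuous_const.mul (continuous_pow e)).sub continuous_const)).continuousWithinAt
    · exact hnz
end

section
/- Let n ≥ 3 be an integer, let x : [t0, T) → ℝ be a Schwarzschild profile solution, and let u : [t0, T) → ℝ be a positive, twice continuously differentiable function satisfying u''(t) = (n−2)·(1 + u'(t)²)/u(t) with u(t0) = √(R0² − t0²) and t0·u'(t0) = u(t0). Then x(t) ≥ u(t) for all t ∈ [t0, T). -/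
open Set Filter Topology



private lemma mono_help {a b : ℝ} {f f' : ℝ → ℝ}
    (hd : ∀ s ∈ Set.Icc a b, HasDerivAt f (f' s) s)
    (h0 : ∀ s ∈ Set.Icc a b, 0 ≤ f' s) :
    ∀ s ∈ Set.Icc a b, f a ≤ f s := by
  intro s hs
  have hmono : MonotoneOn f (Set.Icc a b) := by
    apply monotoneOn_of_deriv_nonneg (convex_Icc a b)
    · exact fun z hz => (hd z hz).continuousAt.continuousWithinAt
    · intro z hz
      rw [interior_Icc] at hz
      exact (hd z (Set.Ioo_subset_Icc_self hz)).differentiableAt.differentiableWithinAt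
    · intro z hz
      rw [interior_Icc] at hz
      rw [(hd z (Set.Ioo_subset_Icc_self hz)).deriv]
      exact h0 z (Set.Ioo_subset_Icc_self hz)
  exact hmono (Set.left_mem_Icc.2 (hs.1.trans hs.2)) hs hs.1

private lemma eventually_nonneg_right {f : ℝ → ℝ} {c z : ℝ} (hd : HasDerivAt f c z)
    (hc : 0 < c) (hz : f z = 0) : ∀ᶠ w in nhdsWithin z (Set.Ioi z), 0 ≤ f w := by
  rw [hasDerivAt_iff_tendsto_slope] at hd
  have h1 : ∀ᶠ w in 𝓝[≠] z, 0 < slope f z w := hd.eventually (eventually_gt_nhds hc)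
  have h2 : ∀ᶠ w in 𝓝[>] z, 0 < slope f z w :=
    h1.filter_mono (nhdsWithin_mono z (fun w (hw : w ∈ Set.Ioi z) => ne_of_gt hw))
  filter_upwards [h2, self_mem_nhdsWithin] with w hw hw'
  rw [slope_def_field] at hw
  have hwz : 0 < w - z := sub_pos.2 hw'
  have := mul_pos hw hwz
  rw [div_mul_cancel₀ _ (ne_of_gt hwz)] at this
  linarith

/-- a Schwarzschild profile solution x lies above the solution u
of the Euclidean comparison ODE u'' = (n−2)(1+u'²)/u with the same
free-boundary initial conditions. -/
theorem statement10 (n : ℕ) (hn : 3 ≤ n) (m R0 t0 : ℝ) (hm : 0 < m)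
    (ht0 : 0 < t0) (htR : t0 < R0) (T : EReal) (hT : (t0 : EReal) < T)
    (x x' x'' : ℝ → ℝ) (hx : IsSchwarzschildProfile n m R0 t0 T x x' x'')
    (u u' u'' : ℝ → ℝ)
    (hu1 : ∀ t : ℝ, t0 ≤ t → (t : EReal) < T → HasDerivAt u (u' t) t)
    (hu2 : ∀ t : ℝ, t0 ≤ t → (t : EReal) < T → HasDerivAt u' (u'' t) t)
    (hu2c : ContinuousOn u'' {t : ℝ | t0 ≤ t ∧ (t : EReal) < T})
    (hupos : ∀ t : ℝ, t0 ≤ t → (t : EReal) < T → 0 < u t)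
    (hode : ∀ t : ℝ, t0 ≤ t → (t : EReal) < T →
      u'' t = ((n : ℝ) - 2) * (1 + (u' t) ^ 2) / u t)
    (hinit : u t0 = Real.sqrt (R0 ^ 2 - t0 ^ 2))
    (hinit' : t0 * u' t0 = u t0) :
    ∀ t : ℝ, t0 ≤ t → (t : EReal) < T → u t ≤ x t := by
  intro t1 ht1 ht1T
  set r : ℝ := Real.sqrt (R0 ^ 2 - t0 ^ 2) with hr_def
  have hrpos : 0 < r := Real.sqrt_pos.2 (by nlinarith)
  set I : Set ℝ := Set.Icc t0 t1 with hI_def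
  have hmemI : ∀ s ∈ I, t0 ≤ s ∧ (s : EReal) < T := fun s hs =>
    ⟨hs.1, lt_of_le_of_lt (EReal.coe_le_coe_iff.2 hs.2) ht1T⟩
  have hxpos : ∀ s ∈ I, 0 < x s := fun s hs => hx.pos s (hmemI s hs).1 (hmemI s hs).2
  have hxd : ∀ s ∈ I, HasDerivAt x (x' s) s := fun s hs =>
    hx.hasDeriv s (hmemI s hs).1 (hmemI s hs).2
  have hxd2 : ∀ s ∈ I, HasDerivAt x' (x'' s) s := fun s hs =>
    hx.hasDeriv2 s (hmemI s hs).1 (hmemI s hs).2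
  have hxode : ∀ s ∈ I, x'' s = ((s * x' s - x s) * schChi n m (x s) s
      + ((n : ℝ) - 2) / x s) * (1 + (x' s) ^ 2) := fun s hs =>
    hx.ode s (hmemI s hs).1 (hmemI s hs).2
  have hupos' : ∀ s ∈ I, 0 < u s := fun s hs => hupos s (hmemI s hs).1 (hmemI s hs).2
  have hud : ∀ s ∈ I, HasDerivAt u (u' s) s := fun s hs =>
    hu1 s (hmemI s hs).1 (hmemI s hs).2
  have hud2 : ∀ s ∈ I, HasDerivAt u' (u'' s) s := fun s hs =>
    hu2 s (hmemI s hs).1 (hmemI s hs).2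
  have huode : ∀ s ∈ I, u'' s = ((n : ℝ) - 2) * (1 + (u' s) ^ 2) / u s := fun s hs =>
    hode s (hmemI s hs).1 (hmemI s hs).2
  have hd2 : (0 : ℝ) < (n : ℝ) - 2 := by
    have : (3 : ℝ) ≤ (n : ℝ) := by exact_mod_cast hn
    linarith
  have hchi_nonneg : ∀ s ∈ I, 0 ≤ schChi n m (x s) s := by
    intro s hs
    have hA : 0 < x s ^ 2 + s ^ 2 := by nlinarith [hxpos s hs, sq_nonneg s]
    have hB : 0 < (x s ^ 2 + s ^ 2) ^ n := pow_pos hA n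
    apply div_nonneg
    · nlinarith
    · nlinarith
  -- Step A : v ≥ 0 on I
  set v : ℝ → ℝ := fun s => s * x' s - x s with hv_def
  have hvd : ∀ s ∈ I, HasDerivAt v (s * x'' s) s := by
    intro s hs
    have h := ((hasDerivAt_id s).mul (hxd2 s hs)).sub (hxd s hs)
    refine h.congr_deriv (Eq.symm ?_)
    simp only [id_eq]
    ring
  have hv0 : v t0 = 0 := by simp [hv_def, sub_eq_zero.2 hx.initDeriv]
  have hvnn : ∀ s ∈ I, 0 ≤ v s := by
    have hvc : ContinuousOn v I := fun s hs => (hvd s hs).continuousAt.continuousWithinAt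
    have hsub : I ⊆ {w | 0 ≤ v w} := by
      apply IsClosed.Icc_subset_of_forall_exists_gt
      · have h1 := hvc.preimage_isClosed_of_isClosed isClosed_Icc (isClosed_Ici (a := (0:ℝ)))
        have h2 : {w | 0 ≤ v w} ∩ Set.Icc t0 t1 = I ∩ v ⁻¹' Set.Ici 0 := by
          rw [Set.inter_comm]; rfl
        rw [h2]; exact h1
      · exact le_of_eq hv0.symm
      · intro z hz y hy
        have hzI : z ∈ I := ⟨hz.2.1, le_of_lt hz.2.2⟩
        have hev : ∀ᶠ w in 𝓝[>] z, 0 ≤ v w := by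
          rcases lt_or_eq_of_le (show (0:ℝ) ≤ v z from hz.1) with hlt | heq
          · have h3 : ∀ᶠ w in 𝓝 z, 0 < v w :=
              (hvd z hzI).continuousAt.eventually_const_lt hlt
            exact (h3.filter_mono nhdsWithin_le_nhds).mono fun w hw => hw.le
          · have hx''pos : 0 < x'' z := by
              rw [hxode z hzI]
              have hveq : z * x' z - x z = 0 := heq.symm
              rw [hveq]
              have := div_pos hd2 (hxpos z hzI)
              nlinarith [sq_nonneg (x' z)]
            exact eventually_nonneg_right (hvd z hzI)
              (mul_pos (lt_of_lt_of_le ht0 hz.2.1) hx''pos) heq.symm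
        have hmem2 : {w | 0 ≤ v w} ∩ Set.Ioc z y ∈ 𝓝[>] z :=
          Filter.inter_mem hev (Ioc_mem_nhdsGT_of_mem ⟨le_refl z, hy⟩)
        exact Filter.nonempty_of_mem hmem2
    exact fun s hs => hsub hs
  -- Step B : positivity of second derivatives, monotonicity
  have hx''pos : ∀ s ∈ I, 0 < x'' s := by
    intro s hs
    rw [hxode s hs]
    have h1 : 0 ≤ (s * x' s - x s) * schChi n m (x s) s :=
      mul_nonneg (hvnn s hs) (hchi_nonneg s hs)
    have h2 : 0 < ((n : ℝ) - 2) / x s := div_pos hd2 (hxpos s hs)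
    have h3 : 0 < 1 + x' s ^ 2 := by positivity
    have h4 : 0 < (s * x' s - x s) * schChi n m (x s) s + ((n : ℝ) - 2) / x s := by linarith
    exact mul_pos h4 h3
  have hu''pos : ∀ s ∈ I, 0 < u'' s := by
    intro s hs
    rw [huode s hs]
    apply div_pos _ (hupos' s hs)
    nlinarith [sq_nonneg (u' s)]
  have hxt0 : x t0 = r := hx.init
  have hut0 : u t0 = r := hinit
  have hx't0 : x' t0 = r / t0 := by
    have h := hx.initDeriv
    rw [hxt0] at h
    field_simp
    linarith
  have hu't0 : u' t0 = r / t0 := by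
    have h := hinit'
    rw [hut0] at h
    field_simp
    linarith
  have hcpos : 0 < r / t0 := div_pos hrpos ht0
  have hx'ge : ∀ s ∈ I, r / t0 ≤ x' s := by
    intro s hs
    have := mono_help hxd2 (fun z hz => (hx''pos z hz).le) s hs
    rwa [hx't0] at this
  have hx'pos : ∀ s ∈ I, 0 < x' s := fun s hs => lt_of_lt_of_le hcpos (hx'ge s hs)
  have hu'ge : ∀ s ∈ I, r / t0 ≤ u' s := by
    intro s hs
    have := mono_help hud2 (fun z hz => (hu''pos z hz).le) s hs
    rwa [hu't0] at this
  have hu'pos : ∀ s ∈ I, 0 < u' s := fun s hs => lt_of_lt_of_le hcpos (hu'ge s hs)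
  have hxge : ∀ s ∈ I, r ≤ x s := by
    intro s hs
    have := mono_help hxd (fun z hz => (hx'pos z hz).le) s hs
    rwa [hxt0] at this
  have huge : ∀ s ∈ I, r ≤ u s := by
    intro s hs
    have := mono_help hud (fun z hz => (hu'pos z hz).le) s hs
    rwa [hut0] at this
  -- Step C : first integrals
  set k : ℕ := 2 * (n - 2) with hk_def
  have hk2 : 2 ≤ k := by omega
  have hkcast : (k : ℝ) = 2 * ((n : ℝ) - 2) := by
    rw [hk_def]
    push_cast [Nat.cast_sub (show 2 ≤ n by omega)]
    ring
  set K0 : ℝ := (1 + (r / t0) ^ 2) / r ^ k with hK0_def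
  have hK0pos : 0 < K0 := div_pos (by positivity) (pow_pos hrpos k)
  set Q : ℝ → ℝ := fun s => (1 + u' s ^ 2) / u s ^ k with hQ_def
  set P : ℝ → ℝ := fun s => (1 + x' s ^ 2) / x s ^ k with hP_def
  have hpowsplit : ∀ w : ℝ, w ^ (k - 1) * w = w ^ k := by
    intro w
    rw [← pow_succ]
    congr 1
    omega
  have hQd : ∀ s ∈ I, HasDerivAt Q 0 s := by
    intro s hs
    have hune : u s ≠ 0 := (hupos' s hs).ne'
    have hnum : HasDerivAt (fun w => 1 + u' w ^ 2) (2 * u' s * u'' s) s := by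
      have h := (hasDerivAt_const s (1 : ℝ)).add ((hud2 s hs).pow 2)
      refine h.congr_deriv (Eq.symm ?_)
      push_cast
      ring
    have hden : HasDerivAt (fun w => u w ^ k) ((k : ℝ) * u s ^ (k - 1) * u' s) s :=
      (hud s hs).pow k
    have h := hnum.div hden (pow_ne_zero k hune)
    refine h.congr_deriv (Eq.symm ?_)
    rw [huode s hs, hkcast, ← hpowsplit (u s)]
    field_simp
    ring
  have hQconst : ∀ s ∈ I, Q s = Q t0 := by
    intro s hs
    have h1 := mono_help hQd (fun z _ => le_refl 0) s hs
    have h2 := mono_help (f := fun w => -Q w) (f' := fun _ => (0 : ℝ))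
      (fun z hz => (hQd z hz).neg.congr_deriv neg_zero) (fun z _ => le_refl 0) s hs
    simp at h2
    linarith
  have hQ0 : Q t0 = K0 := by
    rw [hQ_def, hK0_def]
    simp only []
    rw [hut0, hu't0]
  have huid : ∀ s ∈ I, 1 + u' s ^ 2 = K0 * u s ^ k := by
    intro s hs
    have h := hQconst s hs
    rw [hQ0] at h
    have hune : u s ^ k ≠ 0 := pow_ne_zero k (hupos' s hs).ne'
    rw [hQ_def] at h
    field_simp at h
    linarith [h]
  have hPd : ∀ s ∈ I, HasDerivAt P
      (2 * x' s * (s * x' s - x s) * schChi n m (x s) s * (1 + x' s ^ 2) / x s ^ k) s := by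
    intro s hs
    have hxne : x s ≠ 0 := (hxpos s hs).ne'
    have hnum : HasDerivAt (fun w => 1 + x' w ^ 2) (2 * x' s * x'' s) s := by
      have h := (hasDerivAt_const s (1 : ℝ)).add ((hxd2 s hs).pow 2)
      refine h.congr_deriv (Eq.symm ?_)
      push_cast
      ring
    have hden : HasDerivAt (fun w => x w ^ k) ((k : ℝ) * x s ^ (k - 1) * x' s) s :=
      (hxd s hs).pow k
    have h := hnum.div hden (pow_ne_zero k hxne)
    refine h.congr_deriv (Eq.symm ?_)
    rw [hxode s hs, hkcast, ← hpowsplit (x s)]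
    field_simp
    ring
  have hP0 : P t0 = K0 := by
    rw [hP_def, hK0_def]
    simp only []
    rw [hxt0, hx't0]
  have hPge : ∀ s ∈ I, K0 ≤ P s := by
    intro s hs
    have hnn : ∀ z ∈ I, 0 ≤ 2 * x' z * (z * x' z - x z) * schChi n m (x z) z
        * (1 + x' z ^ 2) / x z ^ k := by
      intro z hz
      apply div_nonneg _ (pow_pos (hxpos z hz) k).le
      have h1 : 0 ≤ 2 * x' z := by linarith [hx'pos z hz]
      have h2 : (0:ℝ) ≤ z * x' z - x z := hvnn z hz
      have h3 := hchi_nonneg z hz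
      have h4 : (0:ℝ) ≤ 1 + x' z ^ 2 := by positivity
      exact mul_nonneg (mul_nonneg (mul_nonneg h1 h2) h3) h4
    have h := mono_help hPd hnn s hs
    rwa [hP0] at h
  have hxid : ∀ s ∈ I, K0 * x s ^ k ≤ 1 + x' s ^ 2 := by
    intro s hs
    have h := hPge s hs
    rw [hP_def] at h
    have hxk : 0 < x s ^ k := pow_pos (hxpos s hs) k
    calc K0 * x s ^ k ≤ (1 + x' s ^ 2) / x s ^ k * x s ^ k :=
          mul_le_mul_of_nonneg_right h hxk.le
    _ = 1 + x' s ^ 2 := div_mul_cancel₀ _ hxk.ne'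
  -- Step D : comparison via the primitive Φ
  set φ : ℝ → ℝ := fun q => Real.sqrt (K0 * q ^ k - 1) with hφ_def
  set ψ : ℝ → ℝ := fun q => (φ q)⁻¹ with hψ_def
  have hφc : Continuous φ :=
    Real.continuous_sqrt.comp ((continuous_const.mul (continuous_pow k)).sub continuous_const)
  have hφarg : ∀ q : ℝ, r ≤ q → (r / t0) ^ 2 ≤ K0 * q ^ k - 1 := by
    intro q hq
    have h1 : K0 * r ^ k ≤ K0 * q ^ k :=
      mul_le_mul_of_nonneg_left (pow_le_pow_left₀ hrpos.le hq k) hK0pos.le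
    have h2 : K0 * r ^ k = 1 + (r / t0) ^ 2 := by
      rw [hK0_def]
      field_simp
    linarith
  have hφpos : ∀ q : ℝ, r ≤ q → 0 < φ q := by
    intro q hq
    apply Real.sqrt_pos.2
    have := hφarg q hq
    have h2 : (0:ℝ) < (r / t0) ^ 2 := by positivity
    linarith
  have hψmeas : Measurable ψ := hφc.measurable.inv
  have hΦd : ∀ q : ℝ, r ≤ q → HasDerivAt (fun w => ∫ τ in r..w, ψ τ) (ψ q) q := by
    intro q hq
    apply intervalIntegral.integral_hasDerivAt_right
    · apply ContinuousOn.intervalIntegrable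
      intro τ hτ
      rw [Set.uIcc_of_le hq] at hτ
      exact (hφc.continuousAt.inv₀ (hφpos τ hτ.1).ne').continuousWithinAt
    · exact ⟨Set.univ, Filter.univ_mem, hψmeas.aestronglyMeasurable⟩
    · exact hφc.continuousAt.inv₀ (hφpos q hq).ne'
  set Φ : ℝ → ℝ := fun w => ∫ τ in r..w, ψ τ with hΦ_def
  have hu'eq : ∀ s ∈ I, u' s = φ (u s) := by
    intro s hs
    have h1 : u' s ^ 2 = K0 * u s ^ k - 1 := by linarith [huid s hs]
    have h2 : φ (u s) = |u' s| := by
      rw [hφ_def]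
      simp only []
      rw [← h1, Real.sqrt_sq_eq_abs]
    rw [h2, abs_of_pos (hu'pos s hs)]
  have hx'geφ : ∀ s ∈ I, φ (x s) ≤ x' s := by
    intro s hs
    have h1 : K0 * x s ^ k - 1 ≤ x' s ^ 2 := by linarith [hxid s hs]
    calc φ (x s) ≤ Real.sqrt (x' s ^ 2) := Real.sqrt_le_sqrt h1
    _ = |x' s| := Real.sqrt_sq_eq_abs _
    _ = x' s := abs_of_pos (hx'pos s hs)
  set H : ℝ → ℝ := fun s => Φ (x s) - Φ (u s) with hH_def
  have hHd : ∀ s ∈ I, HasDerivAt H (ψ (x s) * x' s - ψ (u s) * u' s) s := by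
    intro s hs
    have h1 := (hΦd (x s) (hxge s hs)).comp s (hxd s hs)
    have h2 := (hΦd (u s) (huge s hs)).comp s (hud s hs)
    have h := h1.sub h2
    exact h
  have hHnn : ∀ s ∈ I, 0 ≤ H s := by
    have hnn : ∀ s ∈ I, 0 ≤ ψ (x s) * x' s - ψ (u s) * u' s := by
      intro s hs
      have hφx := hφpos (x s) (hxge s hs)
      have hφu := hφpos (u s) (huge s hs)
      have h1 : ψ (u s) * u' s = 1 := by
        rw [hψ_def]
        simp only []
        rw [hu'eq s hs]
        exact inv_mul_cancel₀ hφu.ne'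
      have h2 : (1:ℝ) ≤ ψ (x s) * x' s := by
        have h3 : ψ (x s) * φ (x s) = 1 := inv_mul_cancel₀ hφx.ne'
        calc (1:ℝ) = ψ (x s) * φ (x s) := h3.symm
        _ ≤ ψ (x s) * x' s :=
          mul_le_mul_of_nonneg_left (hx'geφ s hs) (by positivity)
      linarith
    intro s hs
    have h := mono_help hHd hnn s hs
    have h0 : H t0 = 0 := by
      rw [hH_def]
      simp only []
      rw [hxt0, hut0, sub_self]
    rwa [h0] at h
  -- conclusion
  have ht1I : t1 ∈ I := ⟨ht1, le_refl t1⟩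
  by_contra hcon
  push_neg at hcon
  have hsm : StrictMonoOn Φ (Set.Icc r (u t1)) := by
    apply strictMonoOn_of_deriv_pos (convex_Icc _ _)
    · exact fun q hq => (hΦd q hq.1).continuousAt.continuousWithinAt
    · intro q hq
      rw [interior_Icc] at hq
      rw [(hΦd q hq.1.le).deriv]
      exact inv_pos.2 (hφpos q hq.1.le)
  have h1 : Φ (x t1) < Φ (u t1) :=
    hsm ⟨hxge t1 ht1I, hcon.le⟩ ⟨huge t1 ht1I, le_refl _⟩ hcon
  have h2 := hHnn t1 ht1I
  rw [hH_def] at h2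
  simp only [] at h2
  linarith
end

section
/- Let n ≥ 4 be an integer and let x : [t0, t*) → ℝ be a Schwarzschild profile solution. Then t* ≤ h0, where h0 = t0 + ∫_{√(R0²−t0²)}^{+∞} dμ/√((R0/t0)²·(μ/√(R0²−t0²))^{2(n−2)} − 1) < +∞. In particular every Schwarzschild profile solution with n ≥ 4 blows up in finite time, and the corresponding rotationally symmetric free-boundary minimal hypersurface is contained in the slab t0 ≤ xₙ ≤ h0. -/
open MeasureTheory

/-- Mean value theorem helper: nonnegative derivative on a closed interval gives
`f a ≤ f b`. -/
private lemma mvt_ge {a b : ℝ} {f f' : ℝ → ℝ} (hab : a ≤ b)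
    (hd : ∀ t ∈ Set.Icc a b, HasDerivAt f (f' t) t)
    (h0 : ∀ t ∈ Set.Icc a b, 0 ≤ f' t) : f a ≤ f b := by
  rcases eq_or_lt_of_le hab with h | h
  · rw [h]
  · have hc : ContinuousOn f (Set.Icc a b) :=
      fun t ht => ((hd t ht).continuousAt).continuousWithinAt
    obtain ⟨c, hc1, hc2⟩ := exists_hasDerivAt_eq_slope f f' h hc
      (fun t ht => hd t ⟨ht.1.le, ht.2.le⟩)
    have h3 := h0 c ⟨hc1.1.le, hc1.2.le⟩
    rw [hc2] at h3
    have hba : (0:ℝ) < b - a := by linarith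
    have h4 := mul_nonneg h3 hba.le
    rw [div_mul_cancel₀ _ hba.ne'] at h4
    linarith

set_option maxHeartbeats 2000000 in
/-- for n ≥ 4 every Schwarzschild profile solution blows up in
finite time: its maximal existence time t* satisfies t* ≤ h0, where
h0 = t0 + ∫_{√(R0²−t0²)}^{+∞} dμ/√((R0/t0)²(μ/√(R0²−t0²))^{2(n−2)} − 1)
is finite (the integrand is integrable).  Hence the corresponding
hypersurface of revolution lies in the slab t0 ≤ xₙ ≤ h0. -/
theorem statement11 (n : ℕ) (hn : 4 ≤ n) (m R0 t0 : ℝ) (hm : 0 < m)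
    (ht0 : 0 < t0) (htR : t0 < R0) (tstar : EReal) (hts : (t0 : EReal) < tstar)
    (x x' x'' : ℝ → ℝ) (hx : IsSchwarzschildProfile n m R0 t0 tstar x x' x'') :
    IntegrableOn (fun μ : ℝ =>
        1 / Real.sqrt ((R0 / t0) ^ 2
          * (μ / Real.sqrt (R0 ^ 2 - t0 ^ 2)) ^ (2 * (n - 2)) - 1))
      (Set.Ioi (Real.sqrt (R0 ^ 2 - t0 ^ 2))) ∧
    tstar ≤ ((t0 + ∫ μ in Set.Ioi (Real.sqrt (R0 ^ 2 - t0 ^ 2)),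
        1 / Real.sqrt ((R0 / t0) ^ 2
          * (μ / Real.sqrt (R0 ^ 2 - t0 ^ 2)) ^ (2 * (n - 2)) - 1) : ℝ)
      : EReal) := by
  have hR0 : 0 < R0 := ht0.trans htR
  have hsq : 0 < R0 ^ 2 - t0 ^ 2 := by nlinarith
  set x0 : ℝ := Real.sqrt (R0 ^ 2 - t0 ^ 2) with hx0def
  have hx0 : 0 < x0 := Real.sqrt_pos.mpr hsq
  have hx0sq : x0 ^ 2 = R0 ^ 2 - t0 ^ 2 := Real.sq_sqrt hsq.le
  set c2 : ℝ := (R0 / t0) ^ 2 with hc2def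
  have hc2 : 1 < c2 := one_lt_pow₀ ((one_lt_div ht0).mpr htR) (by norm_num)
  set k : ℕ := 2 * (n - 2) with hkdef
  have hk4 : 4 ≤ k := by omega
  have hkcast : (k : ℝ) = 2 * ((n : ℝ) - 2) := by
    have h2n : 2 ≤ n := by omega
    rw [hkdef]
    push_cast [Nat.cast_sub h2n]
    ring
  have hn2 : (2 : ℝ) ≤ (n : ℝ) - 2 := by
    have : (4 : ℝ) ≤ (n : ℝ) := by exact_mod_cast hn
    linarith
  set F : ℝ → ℝ := fun μ : ℝ => 1 / Real.sqrt (c2 * (μ / x0) ^ k - 1) with hFdef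
  -- positivity of the argument of the square root on `Ici x0`
  have hargpos : ∀ μ : ℝ, x0 ≤ μ → 0 < c2 * (μ / x0) ^ k - 1 := by
    intro μ hμ
    have hr : 1 ≤ μ / x0 := (one_le_div hx0).mpr hμ
    have h1 : (1:ℝ) ≤ (μ / x0) ^ k := one_le_pow₀ hr
    nlinarith
  have hFnonneg : ∀ μ : ℝ, 0 ≤ F μ := fun μ => by
    rw [hFdef]; positivity
  have hFcont : ContinuousOn F (Set.Ici x0) := by
    rw [hFdef]
    apply ContinuousOn.div continuousOn_const
    · exact (Real.continuous_sqrt.comp (by continuity)).continuousOn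
    · intro μ hμ
      exact (Real.sqrt_pos.mpr (hargpos μ hμ)).ne'
  -- Part 1: integrability
  have hc21 : (0:ℝ) < c2 - 1 := by linarith
  have hBpos : 0 < Real.sqrt (c2 - 1) := Real.sqrt_pos.mpr hc21
  have hint : IntegrableOn F (Set.Ioi x0) := by
    have hbound : Integrable (fun μ : ℝ => (x0 ^ 2 / Real.sqrt (c2 - 1)) * μ ^ (-2 : ℝ))
        (volume.restrict (Set.Ioi x0)) :=
      (integrableOn_Ioi_rpow_of_lt (by norm_num) hx0).const_mul _
    refine hbound.mono'
      ((hFcont.mono (Set.Ioi_subset_Ici le_rfl)).aestronglyMeasurable measurableSet_Ioi) ?_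
    rw [MeasureTheory.ae_restrict_iff' measurableSet_Ioi]
    refine MeasureTheory.ae_of_all _ (fun μ hμ => ?_)
    have hμx0 : x0 ≤ μ := (Set.mem_Ioi.mp hμ).le
    have hμ0 : 0 < μ := hx0.trans_le hμx0
    have hr : 1 ≤ μ / x0 := (one_le_div hx0).mpr hμx0
    have hpow : (μ / x0) ^ 4 ≤ (μ / x0) ^ k := pow_le_pow_right₀ hr hk4
    have hpow1 : (1:ℝ) ≤ (μ / x0) ^ 4 := one_le_pow₀ hr
    have h1 : (c2 - 1) * (μ / x0) ^ 4 ≤ c2 * (μ / x0) ^ k - 1 := by nlinarith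
    have h2 : Real.sqrt (c2 - 1) * (μ / x0) ^ 2 ≤ Real.sqrt (c2 * (μ / x0) ^ k - 1) := by
      have h3 := Real.sqrt_le_sqrt h1
      rwa [Real.sqrt_mul hc21.le, show ((μ / x0) : ℝ) ^ 4 = ((μ / x0) ^ 2) ^ 2 by ring,
        Real.sqrt_sq (by positivity)] at h3
    have hden : (0:ℝ) < Real.sqrt (c2 - 1) * (μ / x0) ^ 2 := by positivity
    have h4 : F μ ≤ 1 / (Real.sqrt (c2 - 1) * (μ / x0) ^ 2) := by
      rw [hFdef]
      exact one_div_le_one_div_of_le hden h2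
    have h5 : 1 / (Real.sqrt (c2 - 1) * (μ / x0) ^ 2)
        = (x0 ^ 2 / Real.sqrt (c2 - 1)) * μ ^ (-2 : ℝ) := by
      rw [show (-2 : ℝ) = -((2:ℕ) : ℝ) by norm_num, Real.rpow_neg hμ0.le, Real.rpow_natCast]
      field_simp
    rw [Real.norm_eq_abs, abs_of_nonneg (hFnonneg μ)]
    rw [h5] at h4
    exact h4
  refine ⟨hint, ?_⟩
  -- nonnegativity of the improper integral
  have hInn : 0 ≤ ∫ μ in Set.Ioi x0, F μ :=
    MeasureTheory.setIntegral_nonneg measurableSet_Ioi (fun μ _ => hFnonneg μ)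
  -- Part 2: the main estimate, for every real T with t0 < T < t*
  have hmain : ∀ T : ℝ, t0 < T → (T : EReal) < tstar → T - t0 ≤ ∫ μ in Set.Ioi x0, F μ := by
    intro T hTt0 hTts
    have hmem : ∀ t ∈ Set.Icc t0 T, t0 ≤ t ∧ (t : EReal) < tstar := by
      intro t ht
      exact ⟨ht.1, lt_of_le_of_lt (EReal.coe_le_coe_iff.mpr ht.2) hTts⟩
    have hD1 : ∀ t ∈ Set.Icc t0 T, HasDerivAt x (x' t) t :=
      fun t ht => hx.hasDeriv t (hmem t ht).1 (hmem t ht).2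
    have hD2 : ∀ t ∈ Set.Icc t0 T, HasDerivAt x' (x'' t) t :=
      fun t ht => hx.hasDeriv2 t (hmem t ht).1 (hmem t ht).2
    have hxpos : ∀ t ∈ Set.Icc t0 T, 0 < x t :=
      fun t ht => hx.pos t (hmem t ht).1 (hmem t ht).2
    have hode : ∀ t ∈ Set.Icc t0 T, x'' t
        = ((t * x' t - x t) * schChi n m (x t) t + ((n : ℝ) - 2) / x t) * (1 + (x' t) ^ 2) :=
      fun t ht => hx.ode t (hmem t ht).1 (hmem t ht).2
    have hchi : ∀ t ∈ Set.Icc t0 T, 0 < schChi n m (x t) t := by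
      intro t ht
      have hxp := hxpos t ht
      have hs : 0 < x t ^ 2 + t ^ 2 := by positivity
      unfold schChi
      apply div_pos
      · have : (4:ℝ) ≤ (n:ℝ) := by exact_mod_cast hn
        nlinarith
      · exact add_pos (by positivity) (mul_pos hm hs)
    -- derivative of w t = t * x' t − x t
    have hwD : ∀ t ∈ Set.Icc t0 T, HasDerivAt (fun s => s * x' s - x s) (t * x'' t) t := by
      intro t ht
      have h1 := ((hasDerivAt_id t).mul (hD2 t ht)).sub (hD1 t ht)
      refine h1.congr_deriv ?_
      simp [id]
    have hx''pos : ∀ t ∈ Set.Icc t0 T, 0 ≤ t * x' t - x t → 0 < x'' t := by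
      intro t ht hwt
      rw [hode t ht]
      have hxp := hxpos t ht
      apply mul_pos
      · exact add_pos_of_nonneg_of_pos (mul_nonneg hwt (hchi t ht).le)
          (div_pos (by linarith) hxp)
      · positivity
    -- Step 1: w ≥ 0 on [t0, T]
    have hwnn : ∀ t ∈ Set.Icc t0 T, 0 ≤ t * x' t - x t := by
      by_contra hcon
      push_neg at hcon
      obtain ⟨t1, ht1, hneg⟩ := hcon
      set A : Set ℝ := {t | t ∈ Set.Icc t0 t1 ∧ 0 ≤ t * x' t - x t} with hAdef
      have hmemA : ∀ a : ℝ, a ∈ A ↔ (a ∈ Set.Icc t0 t1 ∧ 0 ≤ a * x' a - x a) := by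
        intro a
        rw [hAdef, Set.mem_setOf_eq]
      have ht0A : t0 ∈ A := (hmemA t0).mpr ⟨⟨le_rfl, ht1.1⟩, by rw [hx.initDeriv]; simp⟩
      have hAne : A.Nonempty := ⟨t0, ht0A⟩
      have hbdd : BddAbove A := ⟨t1, fun a ha => ((hmemA a).mp ha).1.2⟩
      set s := sSup A with hsdef
      have hs0 : t0 ≤ s := le_csSup hbdd ht0A
      have hs1 : s ≤ t1 := csSup_le hAne (fun a ha => ((hmemA a).mp ha).1.2)
      have hsIcc : s ∈ Set.Icc t0 T := ⟨hs0, hs1.trans ht1.2⟩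
      have hwc : ContinuousAt (fun u => u * x' u - x u) s := (hwD s hsIcc).continuousAt
      have hws : 0 ≤ s * x' s - x s := by
        have hclos : s ∈ closure A := csSup_mem_closure hAne hbdd
        haveI hne : (nhdsWithin s A).NeBot := mem_closure_iff_nhdsWithin_neBot.mp hclos
        exact ge_of_tendsto (hwc.continuousWithinAt)
          (eventually_nhdsWithin_of_forall (fun a ha => ((hmemA a).mp ha).2))
      have hst1 : s < t1 := by
        rcases lt_or_eq_of_le hs1 with h | h
        · exact h
        · exact absurd (h ▸ hws) (not_le.mpr hneg)
      have hds : 0 < s * x'' s := mul_pos (lt_of_lt_of_le ht0 hs0) (hx''pos s hsIcc hws)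
      have hslope : ∀ᶠ t in nhdsWithin s (Set.Ioi s),
          0 < slope (fun u => u * x' u - x u) s t := by
        have h6 : ∀ᶠ t in nhdsWithin s {s}ᶜ,
            0 < slope (fun u => u * x' u - x u) s t :=
          (hasDerivAt_iff_tendsto_slope.mp (hwD s hsIcc)).eventually (eventually_gt_nhds hds)
        exact h6.filter_mono (nhdsWithin_mono s (fun t ht => ne_of_gt ht))
      have h7 : Set.Ioc s t1 ∈ nhdsWithin s (Set.Ioi s) :=
        Ioc_mem_nhdsGT_of_mem ⟨le_rfl, hst1⟩
      obtain ⟨t2, ht2slope, ht2mem⟩ :=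
        (hslope.and (Filter.eventually_of_mem h7 (fun t ht => ht))).exists
      have ht2s : s < t2 := ht2mem.1
      have hΔ : 0 < (t2 * x' t2 - x t2) - (s * x' s - x s) := by
        rw [slope_def_field] at ht2slope
        have h8 := mul_pos ht2slope (sub_pos.mpr ht2s)
        rwa [div_mul_cancel₀ _ (sub_pos.mpr ht2s).ne'] at h8
      have ht2A : t2 ∈ A := (hmemA t2).mpr ⟨⟨hs0.trans ht2s.le, ht2mem.2⟩, by linarith⟩
      exact absurd (le_csSup hbdd ht2A) (not_le.mpr ht2s)
    -- Step 2: x' > 0 on [t0, T]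
    have hx'pos : ∀ t ∈ Set.Icc t0 T, 0 < x' t := by
      intro t ht
      have h1 := hwnn t ht
      have h2 := hxpos t ht
      have ht' : 0 < t := lt_of_lt_of_le ht0 ht.1
      nlinarith
    -- Step 3: x is ≥ x0 on [t0, T]
    have hxmono : ∀ t ∈ Set.Icc t0 T, x0 ≤ x t := by
      intro t ht
      have hsub : Set.Icc t0 t ⊆ Set.Icc t0 T := Set.Icc_subset_Icc le_rfl ht.2
      have := mvt_ge ht.1 (fun s hs => hD1 s (hsub hs))
        (fun s hs => (hx'pos s (hsub hs)).le)
      rwa [hx.init] at this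
    -- Step 4: the monotone quantity G = log(1 + x'²) − 2(n−2) log x
    set K : ℝ := 2 * ((n : ℝ) - 2) with hKdef
    set G : ℝ → ℝ := fun s => Real.log (1 + x' s ^ 2) - K * Real.log (x s) with hGdef
    have hGD : ∀ t ∈ Set.Icc t0 T, HasDerivAt G
        (2 * x' t * ((t * x' t - x t) * schChi n m (x t) t)) t := by
      intro t ht
      have hxp := hxpos t ht
      have hbase : HasDerivAt (fun s => 1 + x' s ^ 2) (2 * x' t * x'' t) t := by
        have h1 := (hD2 t ht).pow 2
        have h2 := h1.const_add (1:ℝ)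
        refine h2.congr_deriv ?_
        ring
      have hpos1 : (0:ℝ) < 1 + x' t ^ 2 := by positivity
      have h1 : HasDerivAt (fun s => Real.log (1 + x' s ^ 2))
          ((2 * x' t * x'' t) / (1 + x' t ^ 2)) t := hbase.log hpos1.ne'
      have h2 : HasDerivAt (fun s => Real.log (x s)) (x' t / x t) t :=
        (hD1 t ht).log hxp.ne'
      have h3 := h1.sub (h2.const_mul K)
      refine h3.congr_deriv ?_
      rw [hode t ht, hKdef]
      field_simp
      ring
    have hG : ∀ t ∈ Set.Icc t0 T, G t0 ≤ G t := by
      intro t ht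
      have hsub : Set.Icc t0 t ⊆ Set.Icc t0 T := Set.Icc_subset_Icc le_rfl ht.2
      refine mvt_ge ht.1 (fun s hs => hGD s (hsub hs)) (fun s hs => ?_)
      have hs' := hsub hs
      exact mul_nonneg (by linarith [hx'pos s hs'])
        (mul_nonneg (hwnn s hs') (hchi s hs').le)
    -- Step 5: the key pointwise inequality c2 (x/x0)^k ≤ 1 + x'²
    have hx'0 : x' t0 = x0 / t0 := by
      have h1 := hx.initDeriv
      rw [hx.init, ← hx0def] at h1
      field_simp
      linarith
    have hGt0 : G t0 = Real.log c2 - K * Real.log x0 := by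
      rw [hGdef]
      simp only
      rw [hx'0, hx.init, ← hx0def]
      congr 2
      rw [hc2def, div_pow, div_pow]
      field_simp
      linarith [hx0sq]
    have hkey : ∀ t ∈ Set.Icc t0 T, c2 * (x t / x0) ^ k ≤ 1 + x' t ^ 2 := by
      intro t ht
      have hxp := hxpos t ht
      have h1 := hG t ht
      rw [hGt0] at h1
      have hLpos : 0 < c2 * (x t / x0) ^ k :=
        mul_pos (by linarith) (pow_pos (div_pos hxp hx0) k)
      have hRpos : (0:ℝ) < 1 + x' t ^ 2 := by positivity
      have hlog : Real.log (c2 * (x t / x0) ^ k) ≤ Real.log (1 + x' t ^ 2) := by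
        rw [Real.log_mul (by linarith) (pow_pos (div_pos hxp hx0) k).ne']
        rw [Real.log_pow (x t / x0) k]
        rw [Real.log_div hxp.ne' hx0.ne']
        rw [hGdef] at h1
        simp only at h1
        rw [hkcast]
        linarith
      exact (Real.log_le_log_iff hLpos hRpos).mp hlog
    -- Step 6: pointwise bound 1 ≤ x' t * F (x t)
    have hptwise : ∀ t ∈ Set.Icc t0 T, 1 ≤ x' t * F (x t) := by
      intro t ht
      have h1 := hkey t ht
      have hxge := hxmono t ht
      have hargp : 0 < c2 * (x t / x0) ^ k - 1 := hargpos (x t) hxge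
      have hsqle : Real.sqrt (c2 * (x t / x0) ^ k - 1) ≤ x' t := by
        have h2 : c2 * (x t / x0) ^ k - 1 ≤ (x' t) ^ 2 := by linarith
        calc Real.sqrt (c2 * (x t / x0) ^ k - 1) ≤ Real.sqrt ((x' t) ^ 2) :=
              Real.sqrt_le_sqrt h2
          _ = x' t := Real.sqrt_sq (hx'pos t ht).le
      have hsp : 0 < Real.sqrt (c2 * (x t / x0) ^ k - 1) := Real.sqrt_pos.mpr hargp
      rw [hFdef]
      simp only
      rw [mul_one_div]
      exact (one_le_div hsp).mpr hsqle
    -- Step 7: integrate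
    have hx'cont : ContinuousOn x' (Set.Icc t0 T) :=
      fun t ht => ((hD2 t ht).continuousAt).continuousWithinAt
    have hxcont : ContinuousOn x (Set.Icc t0 T) :=
      fun t ht => ((hD1 t ht).continuousAt).continuousWithinAt
    have huIcc : Set.uIcc t0 T = Set.Icc t0 T := Set.uIcc_of_le hTt0.le
    have hmaps : Set.MapsTo x (Set.Icc t0 T) (Set.Ici x0) := fun t ht => hxmono t ht
    have himage : x '' Set.uIcc t0 T ⊆ Set.Ici x0 := by
      rw [huIcc]
      exact Set.image_subset_iff.mpr hmaps
    have hsubst : ∫ t in t0..T, x' t • (F ∘ x) t = ∫ μ in x t0..x T, F μ := by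
      refine intervalIntegral.integral_comp_smul_deriv' ?_ ?_ (hFcont.mono himage)
      · intro t ht; exact hD1 t (huIcc ▸ ht)
      · rw [huIcc]; exact hx'cont
    have hprodcont : ContinuousOn (fun t => x' t * F (x t)) (Set.Icc t0 T) :=
      hx'cont.mul (hFcont.comp hxcont hmaps)
    have hint2 : IntervalIntegrable (fun t => x' t * F (x t)) volume t0 T := by
      apply ContinuousOn.intervalIntegrable
      rw [huIcc]
      exact hprodcont
    have hstep1 : T - t0 ≤ ∫ t in t0..T, x' t * F (x t) := by
      have h1 : ∫ t in t0..T, (1:ℝ) = T - t0 := by simp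
      rw [← h1]
      exact intervalIntegral.integral_mono_on hTt0.le intervalIntegrable_const hint2
        (fun t ht => hptwise t ht)
    have hstep2 : ∫ t in t0..T, x' t * F (x t) = ∫ μ in x t0..x T, F μ := by
      rw [← hsubst]
      simp only [smul_eq_mul, Function.comp_apply]
    have hxTx0 : x0 ≤ x T := hxmono T ⟨hTt0.le, le_rfl⟩
    have hstep3 : ∫ μ in x t0..x T, F μ ≤ ∫ μ in Set.Ioi x0, F μ := by
      rw [hx.init, ← hx0def, intervalIntegral.integral_of_le hxTx0]
      refine MeasureTheory.setIntegral_mono_set hint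
        (Filter.Eventually.of_forall (fun μ => hFnonneg μ)) ?_
      exact (Set.Ioc_subset_Ioi_self).eventuallyLE
    rw [hstep2] at hstep1
    linarith [hstep1, hstep3]
  -- Conclude in EReal
  by_contra hcon
  push_neg at hcon
  obtain ⟨T, hT1, hT2⟩ := EReal.lt_iff_exists_real_btwn.mp hcon
  have hT1' : t0 + ∫ μ in Set.Ioi x0, F μ < T := EReal.coe_lt_coe_iff.mp hT1
  have hTt0 : t0 < T := by linarith
  have := hmain T hTt0 hT2
  linarith
end

section
/- Let x : [t0, t*) → ℝ be a general profile solution (for any integer n ≥ 3 and any C¹ function U : (0,∞) → ℝ with U'(s) < 0 for all s > 0). Then the function Ψ(t) = t·x'(t) − x(t) satisfies Ψ(t0) = 0, Ψ'(t) > 0 on (t0, t*) and Ψ(t) ≥ 0 on [t0, t*); consequently x'(t) ≥ x(t)/t > 0 and x''(t) ≥ (n−2)·(1 + x'(t)²)/x(t) for all t ∈ [t0, t*). -/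
/-- A general profile solution on the interval [t0, t*) (t* ∈ ℝ ∪ {+∞} encoded
as an `EReal`) for the conformal metric e^{2U(|x|²)}⟨,⟩ on ℝⁿ minus the ball of
radius r0: a twice continuously differentiable positive function `x` (with
first and second derivatives `x'`, `x''`) solving the profile ODE
x'' = [−2(n−1)·U'(x²+t²)·(t·x' − x) + (n−2)/x]·(1 + x'²)
with the free-boundary initial conditions. Here `U'` is the derivative of U. -/
structure IsGeneralProfile (n : ℕ) (U' : ℝ → ℝ) (r0 t0 : ℝ) (tstar : EReal)
    (x x' x'' : ℝ → ℝ) : Prop where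
  hasDeriv : ∀ t : ℝ, t0 ≤ t → (t : EReal) < tstar → HasDerivAt x (x' t) t
  hasDeriv2 : ∀ t : ℝ, t0 ≤ t → (t : EReal) < tstar → HasDerivAt x' (x'' t) t
  cont2 : ContinuousOn x'' {t : ℝ | t0 ≤ t ∧ (t : EReal) < tstar}
  pos : ∀ t : ℝ, t0 ≤ t → (t : EReal) < tstar → 0 < x t
  ode : ∀ t : ℝ, t0 ≤ t → (t : EReal) < tstar →
    x'' t = (-2 * ((n : ℝ) - 1) * U' ((x t) ^ 2 + t ^ 2) * (t * x' t - x t)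
      + ((n : ℝ) - 2) / x t) * (1 + (x' t) ^ 2)
  init : x t0 = Real.sqrt (r0 ^ 2 - t0 ^ 2)
  initDeriv : t0 * x' t0 = x t0

/-- for a general profile solution (U C¹ with U' < 0 on (0,∞)),
Ψ(t) = t·x'(t) − x(t) satisfies Ψ(t0) = 0, Ψ'(t) = t·x''(t) > 0 on (t0,t*),
Ψ ≥ 0 on [t0,t*); consequently x'(t) ≥ x(t)/t > 0 and
x''(t) ≥ (n−2)(1 + x'(t)²)/x(t) on [t0,t*). -/
theorem statement12 (n : ℕ) (hn : 3 ≤ n) (r0 t0 : ℝ) (hr0 : 0 < r0)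
    (ht0 : 0 < t0) (htr : t0 < r0)
    (U U' : ℝ → ℝ)
    (hU : ∀ s : ℝ, 0 < s → HasDerivAt U (U' s) s)
    (hUc : ContinuousOn U' (Set.Ioi (0 : ℝ)))
    (hUneg : ∀ s : ℝ, 0 < s → U' s < 0)
    (tstar : EReal) (hts : (t0 : EReal) < tstar)
    (x x' x'' : ℝ → ℝ) (hx : IsGeneralProfile n U' r0 t0 tstar x x' x'') :
    (t0 * x' t0 - x t0 = 0) ∧
    (∀ t : ℝ, t0 < t → (t : EReal) < tstar →
      HasDerivAt (fun s => s * x' s - x s) (t * x'' t) t ∧ 0 < t * x'' t) ∧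
    (∀ t : ℝ, t0 ≤ t → (t : EReal) < tstar → 0 ≤ t * x' t - x t) ∧
    (∀ t : ℝ, t0 ≤ t → (t : EReal) < tstar → x t / t ≤ x' t ∧ 0 < x t / t) ∧
    (∀ t : ℝ, t0 ≤ t → (t : EReal) < tstar →
      ((n : ℝ) - 2) * (1 + (x' t) ^ 2) / x t ≤ x'' t) := by
  have hn3 : (3:ℝ) ≤ (n:ℝ) := by exact_mod_cast hn
  -- key: if in domain and Ψ t ≥ 0 then x'' t ≥ (n-2)(1+x'^2)/x > 0
  have key : ∀ t : ℝ, t0 ≤ t → (t : EReal) < tstar → 0 ≤ t * x' t - x t →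
      ((n:ℝ) - 2) * (1 + (x' t)^2) / x t ≤ x'' t ∧ 0 < x'' t := by
    intro t ht hts' hΨ
    have hxp := hx.pos t ht hts'
    have hs : (0:ℝ) < (x t)^2 + t^2 := by nlinarith [sq_nonneg t]
    have hU' := hUneg _ hs
    have hode := hx.ode t ht hts'
    have h1 : 0 ≤ -2 * ((n:ℝ) - 1) * U' ((x t)^2 + t^2) * (t * x' t - x t) := by
      apply mul_nonneg _ hΨ
      nlinarith
    have h2 : 0 < ((n:ℝ) - 2) / x t := div_pos (by linarith) hxp
    have h3 : 0 < 1 + (x' t)^2 := by positivity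
    constructor
    · rw [hode]
      have : ((n:ℝ) - 2) * (1 + (x' t)^2) / x t = ((n:ℝ) - 2) / x t * (1 + (x' t)^2) := by
        ring
      rw [this]
      nlinarith
    · rw [hode]
      nlinarith
  -- derivative of Ψ
  have hΨd : ∀ t : ℝ, t0 ≤ t → (t : EReal) < tstar →
      HasDerivAt (fun s => s * x' s - x s) (t * x'' t) t := by
    intro t ht hts'
    have h := ((hasDerivAt_id t).mul (hx.hasDeriv2 t ht hts')).sub (hx.hasDeriv t ht hts')
    refine h.congr_deriv ?_
    simp only [id_eq]
    ring
  -- Ψ is nonnegative on the whole domain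
  have hΨnn : ∀ t : ℝ, t0 ≤ t → (t : EReal) < tstar → 0 ≤ t * x' t - x t := by
    by_contra hcon
    push_neg at hcon
    obtain ⟨b, hb1, hb2, hb3⟩ := hcon
    set A : Set ℝ := {t | t0 ≤ t ∧ (t : EReal) < tstar ∧ t * x' t - x t < 0} with hA
    have hbA : b ∈ A := ⟨hb1, hb2, hb3⟩
    have hAne : A.Nonempty := ⟨b, hbA⟩
    have hAbdd : BddBelow A := ⟨t0, fun a ha => ha.1⟩
    set τ := sInf A with hτdef
    have hτ0 : t0 ≤ τ := le_csInf hAne fun a ha => ha.1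
    have hτb : τ ≤ b := csInf_le hAbdd hbA
    have hτts : (τ : EReal) < tstar :=
      lt_of_le_of_lt (by exact_mod_cast hτb) hb2
    have hΨτd := hΨd τ hτ0 hτts
    have hΨc : ContinuousAt (fun s => s * x' s - x s) τ := hΨτd.continuousAt
    -- Ψ τ ≤ 0
    have hle : τ * x' τ - x τ ≤ 0 := by
      by_contra hgt
      push_neg at hgt
      have hev : ∀ᶠ s in nhds τ, 0 < s * x' s - x s :=
        hΨc.eventually_const_lt hgt
      rw [Metric.eventually_nhds_iff] at hev
      obtain ⟨ε, hε, hball⟩ := hev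
      obtain ⟨a, haA, halt⟩ := (csInf_lt_iff hAbdd hAne).mp
        (show sInf A < τ + ε by rw [← hτdef]; linarith)
      have hτa : τ ≤ a := csInf_le hAbdd haA
      have : 0 < a * x' a - x a := hball (by
        rw [Real.dist_eq, abs_lt]; constructor <;> linarith)
      linarith [haA.2.2]
    -- Ψ τ ≥ 0
    have hge : 0 ≤ τ * x' τ - x τ := by
      rcases eq_or_lt_of_le hτ0 with heq | hlt
      · rw [← heq]
        rw [hx.initDeriv]; simp
      by_contra hneg
      push_neg at hneg
      have hev : ∀ᶠ s in nhds τ, s * x' s - x s < 0 :=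
        hΨc.eventually_lt_const hneg
      rw [Metric.eventually_nhds_iff] at hev
      obtain ⟨ε, hε, hball⟩ := hev
      set s := max t0 (τ - ε/2) with hsdef
      have hs1 : t0 ≤ s := le_max_left _ _
      have hs2 : s < τ := by
        apply max_lt hlt; linarith
      have hsts : (s : EReal) < tstar :=
        lt_of_le_of_lt (by exact_mod_cast hs2.le) hτts
      have hsA : s ∈ A := ⟨hs1, hsts, hball (by
        rw [Real.dist_eq, abs_lt]
        constructor <;> [linarith [le_max_right t0 (τ - ε/2)]; linarith])⟩
      have := csInf_le hAbdd hsA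
      rw [← hτdef] at this
      linarith
    have hΨτ : τ * x' τ - x τ = 0 := le_antisymm hle hge
    -- derivative positive at τ
    have hpos : 0 < τ * x'' τ :=
      mul_pos (lt_of_lt_of_le ht0 hτ0) (key τ hτ0 hτts hge).2
    -- slope argument: Ψ > 0 just right of τ
    have hslope := hasDerivAt_iff_tendsto_slope.mp hΨτd
    have hev : ∀ᶠ s in nhdsWithin τ {τ}ᶜ,
        0 < slope (fun s => s * x' s - x s) τ s :=
      hslope.eventually_const_lt hpos
    have hev' : ∀ᶠ s in nhdsWithin τ (Set.Ioi τ), 0 < s * x' s - x s := by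
      have h1 : ∀ᶠ s in nhdsWithin τ (Set.Ioi τ),
          0 < slope (fun s => s * x' s - x s) τ s :=
        hev.filter_mono (nhdsWithin_mono τ (fun s hs => ne_of_gt hs))
      filter_upwards [h1, self_mem_nhdsWithin] with s hs1 hs2
      have hsτ : (0:ℝ) < s - τ := sub_pos.mpr hs2
      have := mul_pos hs1 hsτ
      rw [slope_def_field] at this
      rw [div_mul_cancel₀ _ (ne_of_gt hsτ)] at this
      linarith [hΨτ]
    obtain ⟨u, hu, hsub⟩ := mem_nhdsGT_iff_exists_Ioo_subset.mp hev'
    obtain ⟨a, haA, halt⟩ := (csInf_lt_iff hAbdd hAne).mp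
      (show sInf A < u by rw [← hτdef]; exact hu)
    have hτa : τ ≤ a := csInf_le hAbdd haA
    have haτ : τ < a := by
      rcases eq_or_lt_of_le hτa with heq | h
      · exfalso; rw [← heq] at haA; linarith [haA.2.2, hΨτ]
      · exact h
    have := hsub ⟨haτ, halt⟩
    exact absurd haA.2.2 (by simp only [Set.mem_setOf_eq] at this; linarith)
  refine ⟨by rw [hx.initDeriv]; ring, ?_, hΨnn, ?_, ?_⟩
  · intro t ht hts'
    refine ⟨hΨd t ht.le hts', ?_⟩
    exact mul_pos (lt_trans ht0 ht) (key t ht.le hts' (hΨnn t ht.le hts')).2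
  · intro t ht hts'
    have htpos : 0 < t := lt_of_lt_of_le ht0 ht
    have h := hΨnn t ht hts'
    constructor
    · rw [div_le_iff₀ htpos]; linarith [h]
    · exact div_pos (hx.pos t ht hts') htpos
  · intro t ht hts'
    exact (key t ht hts' (hΨnn t ht hts')).1
end

section
/- Let n ≥ 4 be an integer and let x : [t0, t*) → ℝ be a general profile solution (for any C¹ function U : (0,∞) → ℝ with U'(s) < 0 for all s > 0). Then t* ≤ h0, where h0 = t0 + ∫_{√(r0²−t0²)}^{+∞} dμ/√((r0/t0)²·(μ/√(r0²−t0²))^{2(n−2)} − 1) < +∞; in particular x blows up in finite time and the corresponding rotationally symmetric free-boundary minimal hypersurface is bounded above by the hyperplane xₙ = h0. -/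
open MeasureTheory

private lemma mono_aux14 {F F' : ℝ → ℝ} {p q : ℝ} (hpq : p ≤ q)
    (hF : ∀ t ∈ Set.Icc p q, HasDerivAt F (F' t) t)
    (h0 : ∀ t ∈ Set.Ioo p q, 0 ≤ F' t) : F p ≤ F q := by
  have hm : MonotoneOn F (Set.Icc p q) := by
    apply monotoneOn_of_deriv_nonneg (convex_Icc p q)
    · exact fun s hs => (hF s hs).continuousAt.continuousWithinAt
    · rw [interior_Icc]
      exact fun s hs =>
        (hF s (Set.Ioo_subset_Icc_self hs)).differentiableAt.differentiableWithinAt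
    · rw [interior_Icc]
      intro s hs
      rw [(hF s (Set.Ioo_subset_Icc_self hs)).deriv]
      exact h0 s hs
  exact hm (Set.left_mem_Icc.mpr hpq) (Set.right_mem_Icc.mpr hpq) hpq

set_option maxHeartbeats 1000000 in
/-- for n ≥ 4, every general profile solution (U C¹ with U' < 0
on (0,∞)) blows up in finite time: t* ≤ h0 where
h0 = t0 + ∫_{√(r0²−t0²)}^{+∞} dμ/√((r0/t0)²(μ/√(r0²−t0²))^{2(n−2)} − 1)
is finite (the integrand is integrable); hence the hypersurface of revolution
is bounded above by the hyperplane xₙ = h0. -/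
theorem statement14 (n : ℕ) (hn : 4 ≤ n) (r0 t0 : ℝ) (hr0 : 0 < r0)
    (ht0 : 0 < t0) (htr : t0 < r0)
    (U U' : ℝ → ℝ)
    (hU : ∀ s : ℝ, 0 < s → HasDerivAt U (U' s) s)
    (hUc : ContinuousOn U' (Set.Ioi (0 : ℝ)))
    (hUneg : ∀ s : ℝ, 0 < s → U' s < 0)
    (tstar : EReal) (hts : (t0 : EReal) < tstar)
    (x x' x'' : ℝ → ℝ) (hx : IsGeneralProfile n U' r0 t0 tstar x x' x'') :
    IntegrableOn (fun μ : ℝ =>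
        1 / Real.sqrt ((r0 / t0) ^ 2
          * (μ / Real.sqrt (r0 ^ 2 - t0 ^ 2)) ^ (2 * (n - 2)) - 1))
      (Set.Ioi (Real.sqrt (r0 ^ 2 - t0 ^ 2))) ∧
    tstar ≤ ((t0 + ∫ μ in Set.Ioi (Real.sqrt (r0 ^ 2 - t0 ^ 2)),
        1 / Real.sqrt ((r0 / t0) ^ 2
          * (μ / Real.sqrt (r0 ^ 2 - t0 ^ 2)) ^ (2 * (n - 2)) - 1) : ℝ)
      : EReal) := by
  have hrt : 0 < r0 ^ 2 - t0 ^ 2 := by nlinarith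
  set a : ℝ := Real.sqrt (r0 ^ 2 - t0 ^ 2) with ha_def
  set c : ℝ := (r0 / t0) ^ 2 with hc_def
  set m : ℕ := n - 2 with hm_def
  have ha : 0 < a := Real.sqrt_pos.mpr hrt
  have ha2 : a ^ 2 = r0 ^ 2 - t0 ^ 2 := Real.sq_sqrt hrt.le
  have hm2 : 2 ≤ m := by omega
  have hmr : (m : ℝ) = (n : ℝ) - 2 := by
    have : ((n - 2 : ℕ) : ℝ) = (n : ℝ) - 2 := by
      have : (2 : ℕ) ≤ n := by omega
      push_cast [Nat.cast_sub this]
      ring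
    simpa [hm_def] using this
  have hc1 : 1 < c := by
    rw [hc_def, div_pow]
    rw [lt_div_iff₀ (by positivity)]
    nlinarith
  have hc0 : 0 < c := lt_trans one_pos hc1
  have hn4 : (4 : ℝ) ≤ (n : ℝ) := by exact_mod_cast hn
  set f : ℝ → ℝ := fun μ : ℝ => 1 / Real.sqrt (c * (μ / a) ^ (2 * m) - 1) with hf_def
  -- basic initial data
  have hxt0 : x t0 = a := hx.init
  have hx'0 : x' t0 = a / t0 := by
    rw [eq_div_iff ht0.ne']
    have := hx.initDeriv
    rw [hxt0] at this
    linarith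
  have hW0 : t0 * x' t0 - x t0 = 0 := by rw [hx.initDeriv]; ring
  have hcinit : 1 + x' t0 ^ 2 = c := by
    rw [hx'0, hc_def, div_pow, div_pow, ha2]
    field_simp
    ring
  -- the sign lemma : W ≥ 0 implies x'' > 0
  have hsign : ∀ t : ℝ, t0 ≤ t → (t : EReal) < tstar → 0 ≤ t * x' t - x t →
      0 < x'' t := by
    intro t ht ht' hW
    rw [hx.ode t ht ht']
    have hxp := hx.pos t ht ht'
    have hargpos : 0 < x t ^ 2 + t ^ 2 := by positivity
    have hU' := hUneg _ hargpos
    have hA : 0 ≤ -2 * ((n : ℝ) - 1) * U' (x t ^ 2 + t ^ 2) * (t * x' t - x t) := by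
      nlinarith [mul_nonneg (mul_nonneg (show (0:ℝ) ≤ 2 * ((n : ℝ) - 1) by linarith)
        (neg_nonneg.mpr hU'.le)) hW]
    have hB : 0 < ((n : ℝ) - 2) / x t := div_pos (by linarith) hxp
    have hC : 0 < 1 + x' t ^ 2 := by positivity
    exact mul_pos (by linarith) hC
  -- derivative of W
  have hWd : ∀ s : ℝ, t0 ≤ s → (s : EReal) < tstar →
      HasDerivAt (fun u => u * x' u - x u) (s * x'' s) s := by
    intro s hs hs'
    have h1 := ((hasDerivAt_id s).mul (hx.hasDeriv2 s hs hs')).sub (hx.hasDeriv s hs hs')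
    refine h1.congr_deriv ?_
    simp
  have hIccD : ∀ {t1 : ℝ}, (t1 : EReal) < tstar → ∀ s ∈ Set.Icc t0 t1,
      t0 ≤ s ∧ (s : EReal) < tstar := by
    intro t1 h s hs
    exact ⟨hs.1, lt_of_le_of_lt (EReal.coe_le_coe_iff.mpr hs.2) h⟩
  -- x'' > 0 everywhere
  have hx2 : ∀ t : ℝ, t0 ≤ t → (t : EReal) < tstar → 0 < x'' t := by
    by_contra hcon
    push_neg at hcon
    obtain ⟨t1, ht1a, ht1b, ht1c⟩ := hcon
    set B : Set ℝ := {t | (t0 ≤ t ∧ (t : EReal) < tstar) ∧ x'' t ≤ 0} with hB_def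
    have hBne : B.Nonempty := ⟨t1, ⟨ht1a, ht1b⟩, ht1c⟩
    have hBbd : BddBelow B := ⟨t0, fun b hb => hb.1.1⟩
    set τ : ℝ := sInf B with hτ_def
    have hτ0 : t0 ≤ τ := le_csInf hBne fun b hb => hb.1.1
    have hτ1 : τ ≤ t1 := csInf_le hBbd ⟨⟨ht1a, ht1b⟩, ht1c⟩
    have hτs : (τ : EReal) < tstar := lt_of_le_of_lt (EReal.coe_le_coe_iff.mpr hτ1) ht1b
    have hτcl : τ ∈ closure B := csInf_mem_closure hBne hBbd
    have hcw : ContinuousWithinAt x'' B τ :=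
      (hx.cont2 τ ⟨hτ0, hτs⟩).mono (fun b hb => hb.1)
    have hmemcl : x'' τ ∈ closure (x'' '' B) := hcw.mem_closure_image hτcl
    have hτneg : x'' τ ≤ 0 := by
      have hsub : x'' '' B ⊆ Set.Iic 0 := by rintro _ ⟨b, hb, rfl⟩; exact hb.2
      exact isClosed_Iic.closure_subset (closure_mono hsub hmemcl)
    have hWτ : 0 ≤ τ * x' τ - x τ := by
      rcases eq_or_lt_of_le hτ0 with h0 | h0
    -- τ = t0
      · rw [← h0]; rw [hW0]
      · have hm := mono_aux14 (F := fun u => u * x' u - x u)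
          (F' := fun s => s * x'' s) h0.le
          (fun s hs => hWd s (hIccD hτs s hs).1 (hIccD hτs s hs).2)
          (by
            intro s hs
            have hsD : t0 ≤ s ∧ (s : EReal) < tstar :=
              hIccD hτs s (Set.Ioo_subset_Icc_self hs)
            have hsB : s ∉ B := fun hmem => absurd (csInf_le hBbd hmem) (not_le.mpr hs.2)
            have hx2s : 0 < x'' s := by
              by_contra hle
              exact hsB ⟨hsD, le_of_not_gt hle⟩
            have : 0 < s := lt_of_lt_of_le ht0 hsD.1
            positivity)
        rw [hW0] at hm
        exact hm
    exact absurd (hsign τ hτ0 hτs hWτ) (not_lt.mpr hτneg)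
  -- W ≥ 0 everywhere
  have hWnn : ∀ t : ℝ, t0 ≤ t → (t : EReal) < tstar → 0 ≤ t * x' t - x t := by
    intro t ht ht'
    rcases eq_or_lt_of_le ht with h0 | h0
    · rw [← h0, hW0]
    · have hm := mono_aux14 (F := fun u => u * x' u - x u)
        (F' := fun s => s * x'' s) h0.le
        (fun s hs => hWd s (hIccD ht' s hs).1 (hIccD ht' s hs).2)
        (by
          intro s hs
          have hsD := hIccD ht' s (Set.Ioo_subset_Icc_self hs)
          have := hx2 s hsD.1 hsD.2
          have : 0 < s := lt_of_lt_of_le ht0 hsD.1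
          have := hx2 s hsD.1 hsD.2
          positivity)
      rw [hW0] at hm
      exact hm
  -- x' ≥ a / t0 > 0
  have hx'lb : ∀ t : ℝ, t0 ≤ t → (t : EReal) < tstar → a / t0 ≤ x' t := by
    intro t ht ht'
    have hm := mono_aux14 (F := x') (F' := x'') ht
      (fun s hs => hx.hasDeriv2 s (hIccD ht' s hs).1 (hIccD ht' s hs).2)
      (fun s hs => (hx2 s (hIccD ht' s (Set.Ioo_subset_Icc_self hs)).1
        (hIccD ht' s (Set.Ioo_subset_Icc_self hs)).2).le)
    rw [hx'0] at hm
    exact hm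
  have hx'pos : ∀ t : ℝ, t0 ≤ t → (t : EReal) < tstar → 0 < x' t := by
    intro t ht ht'
    exact lt_of_lt_of_le (div_pos ha ht0) (hx'lb t ht ht')
  -- x ≥ a
  have hxa : ∀ t : ℝ, t0 ≤ t → (t : EReal) < tstar → a ≤ x t := by
    intro t ht ht'
    have hm := mono_aux14 (F := x) (F' := x') ht
      (fun s hs => hx.hasDeriv s (hIccD ht' s hs).1 (hIccD ht' s hs).2)
      (fun s hs => (hx'pos s (hIccD ht' s (Set.Ioo_subset_Icc_self hs)).1
        (hIccD ht' s (Set.Ioo_subset_Icc_self hs)).2).le)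
    rw [hxt0] at hm
    exact hm
  -- the energy inequality : c (x/a)^(2m) ≤ 1 + x'^2
  have hgd : ∀ s : ℝ, t0 ≤ s → (s : EReal) < tstar →
      HasDerivAt (fun u => Real.log (1 + x' u ^ 2) - 2 * (m : ℝ) * Real.log (x u))
        ((2 * x' s * x'' s * x s - 2 * (m : ℝ) * x' s * (1 + x' s ^ 2)) /
          ((1 + x' s ^ 2) * x s)) s := by
    intro s hs hs'
    have hxp := hx.pos s hs hs'
    have hp : (0 : ℝ) < 1 + x' s ^ 2 := by positivity
    have h1 : HasDerivAt (fun u => 1 + x' u ^ 2) (2 * x' s * x'' s) s := by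
      have h2 := ((hx.hasDeriv2 s hs hs').pow 2).const_add 1
      refine h2.congr_deriv ?_
      simp
    have h3 := h1.log hp.ne'
    have h4 := ((hx.hasDeriv s hs hs').log hxp.ne').const_mul (2 * (m : ℝ))
    have h5 := h3.sub h4
    refine h5.congr_deriv ?_
    field_simp
  have henergy : ∀ t : ℝ, t0 ≤ t → (t : EReal) < tstar →
      c * (x t / a) ^ (2 * m) ≤ 1 + x' t ^ 2 := by
    intro t ht ht'
    have hxp := hx.pos t ht ht'
    have hglb : Real.log (1 + x' t0 ^ 2) - 2 * (m : ℝ) * Real.log (x t0) ≤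
        Real.log (1 + x' t ^ 2) - 2 * (m : ℝ) * Real.log (x t) := by
      rcases eq_or_lt_of_le ht with h0 | h0
      · rw [h0]
      · have hm := mono_aux14
          (F := fun u => Real.log (1 + x' u ^ 2) - 2 * (m : ℝ) * Real.log (x u))
          (F' := fun s => (2 * x' s * x'' s * x s - 2 * (m : ℝ) * x' s * (1 + x' s ^ 2)) /
            ((1 + x' s ^ 2) * x s)) h0.le
          (fun s hs => hgd s (hIccD ht' s hs).1 (hIccD ht' s hs).2)
          (by
            intro s hs
            have hsD := hIccD ht' s (Set.Ioo_subset_Icc_self hs)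
            have hxps := hx.pos s hsD.1 hsD.2
            have hx's := hx'pos s hsD.1 hsD.2
            have hWs := hWnn s hsD.1 hsD.2
            have hkey : (m : ℝ) * (1 + x' s ^ 2) ≤ x'' s * x s := by
              rw [hx.ode s hsD.1 hsD.2]
              have hargpos : 0 < x s ^ 2 + s ^ 2 := by positivity
              have hU' := hUneg _ hargpos
              have hA : 0 ≤ -2 * ((n : ℝ) - 1) * U' (x s ^ 2 + s ^ 2) *
                  (s * x' s - x s) := by
                nlinarith [mul_nonneg (mul_nonneg (show (0:ℝ) ≤ 2 * ((n : ℝ) - 1) by linarith)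
                  (neg_nonneg.mpr hU'.le)) hWs]
              have hC : (0:ℝ) < 1 + x' s ^ 2 := by positivity
              have hexp : (-2 * ((n : ℝ) - 1) * U' (x s ^ 2 + s ^ 2) * (s * x' s - x s)
                    + ((n : ℝ) - 2) / x s) * (1 + x' s ^ 2) * x s
                  = -2 * ((n : ℝ) - 1) * U' (x s ^ 2 + s ^ 2) * (s * x' s - x s)
                    * (1 + x' s ^ 2) * x s + ((n : ℝ) - 2) * (1 + x' s ^ 2) := by
                field_simp
              rw [hexp, hmr]
              nlinarith [mul_nonneg (mul_nonneg hA hC.le) hxps.le]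
            apply div_nonneg _ (by positivity)
            nlinarith)
        simpa using hm
    rw [hxt0, hcinit] at hglb
    have hLpos : 0 < c * (x t / a) ^ (2 * m) := by positivity
    rw [← Real.log_le_log_iff hLpos (by positivity)]
    have h2 : Real.log ((x t / a) ^ (2 * m)) =
        2 * (m : ℝ) * (Real.log (x t) - Real.log a) := by
      rw [Real.log_pow, Real.log_div hxp.ne' ha.ne']
      push_cast
      ring
    rw [Real.log_mul hc0.ne' (by positivity), h2]
    linarith
  -- positivity of the denominators
  have hq : ∀ t : ℝ, t0 ≤ t → (t : EReal) < tstar →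
      0 < c * (x t / a) ^ (2 * m) - 1 := by
    intro t ht ht'
    have h1 : (1 : ℝ) ≤ (x t / a) ^ (2 * m) :=
      one_le_pow₀ ((one_le_div ha).mpr (hxa t ht ht'))
    nlinarith
  -- measurability of f
  have hfm : Measurable f := by
    apply Measurable.div measurable_const
    exact Real.continuous_sqrt.measurable.comp (by fun_prop)
  have hfnn : ∀ μ : ℝ, 0 ≤ f μ := fun μ => by
    simp only [hf_def]
    positivity
  -- integrability of f on Ioi a
  have hint : IntegrableOn f (Set.Ioi a) := by
    have hg : IntegrableOn (fun μ : ℝ => a ^ 2 / Real.sqrt (c - 1) * μ ^ (-2 : ℝ))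
        (Set.Ioi a) := (integrableOn_Ioi_rpow_of_lt (by norm_num) ha).const_mul _
    refine Integrable.mono' hg hfm.aestronglyMeasurable.restrict ?_
    refine (ae_restrict_iff' measurableSet_Ioi).mpr (Filter.Eventually.of_forall ?_)
    intro μ hμ
    have hμa : a < μ := hμ
    have hμpos : 0 < μ := lt_trans ha hμa
    have hr1 : (1 : ℝ) ≤ μ / a := (one_le_div ha).mpr hμa.le
    have h4 : ((μ / a) ^ 2) ^ 2 ≤ (μ / a) ^ (2 * m) := by
      rw [← pow_mul]
      exact pow_le_pow_right₀ hr1 (by omega)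
    have h14 : (1 : ℝ) ≤ ((μ / a) ^ 2) ^ 2 := one_le_pow₀ (one_le_pow₀ hr1)
    have h1 : (c - 1) * ((μ / a) ^ 2) ^ 2 ≤ c * (μ / a) ^ (2 * m) - 1 := by nlinarith
    have hden : Real.sqrt (c - 1) * (μ / a) ^ 2 ≤
        Real.sqrt (c * (μ / a) ^ (2 * m) - 1) := by
      have heq : Real.sqrt (c - 1) * (μ / a) ^ 2 =
          Real.sqrt ((c - 1) * ((μ / a) ^ 2) ^ 2) := by
        rw [Real.sqrt_mul (by linarith), Real.sqrt_sq (by positivity)]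
      rw [heq]
      exact Real.sqrt_le_sqrt h1
    have hdenpos : 0 < Real.sqrt (c - 1) * (μ / a) ^ 2 := by
      apply mul_pos (Real.sqrt_pos.mpr (by linarith))
      positivity
    have hb1 : f μ ≤ 1 / (Real.sqrt (c - 1) * (μ / a) ^ 2) := by
      simp only [hf_def]
      exact one_div_le_one_div_of_le hdenpos hden
    have hb2 : 1 / (Real.sqrt (c - 1) * (μ / a) ^ 2) =
        a ^ 2 / Real.sqrt (c - 1) * μ ^ (-2 : ℝ) := by
      have : μ ^ (-2 : ℝ) = (μ ^ 2)⁻¹ := by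
        rw [show (-2 : ℝ) = -(2 : ℕ) by norm_num, Real.rpow_neg hμpos.le,
          Real.rpow_natCast]
      rw [this]
      have hsne : Real.sqrt (c - 1) ≠ 0 := (Real.sqrt_pos.mpr (by linarith)).ne'
      field_simp
    rw [Real.norm_of_nonneg (hfnn μ)]
    rw [← hb2]
    exact hb1
  -- continuity of f at points ≥ a
  have hfc : ∀ y : ℝ, a ≤ y → ContinuousAt f y := by
    intro y hy
    have h1 : (1 : ℝ) ≤ (y / a) ^ (2 * m) := one_le_pow₀ ((one_le_div ha).mpr hy)
    have hyden : 0 < c * (y / a) ^ (2 * m) - 1 := by nlinarith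
    apply ContinuousAt.div continuousAt_const
    · exact Real.continuous_sqrt.continuousAt.comp (by fun_prop)
    · exact (Real.sqrt_pos.mpr hyden).ne'
  have hfi : ∀ y : ℝ, a ≤ y → IntervalIntegrable f volume a y := by
    intro y hy
    apply ContinuousOn.intervalIntegrable
    rw [Set.uIcc_of_le hy]
    exact fun μ hμ => (hfc μ hμ.1).continuousWithinAt
  -- the antiderivative
  set F : ℝ → ℝ := fun u => ∫ μ in a..u, f μ with hF_def
  have hFd : ∀ y : ℝ, a ≤ y → HasDerivAt F (f y) y := fun y hy =>
    intervalIntegral.integral_hasDerivAt_right (hfi y hy)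
      hfm.stronglyMeasurable.stronglyMeasurableAtFilter (hfc y hy)
  -- the step inequality : t - t0 ≤ F (x t)
  have hstep : ∀ t : ℝ, t0 ≤ t → (t : EReal) < tstar → t - t0 ≤ F (x t) := by
    intro t ht ht'
    rcases eq_or_lt_of_le ht with h0 | h0
    · rw [← h0, hxt0]
      simp [hF_def, intervalIntegral.integral_same]
    · have hm := mono_aux14 (F := fun s => F (x s) - s)
        (F' := fun s => f (x s) * x' s - 1) h0.le
        (by
          intro s hs
          have hsD := hIccD ht' s hs
          exact ((hFd (x s) (hxa s hsD.1 hsD.2)).comp s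
            (hx.hasDeriv s hsD.1 hsD.2)).sub (hasDerivAt_id s))
        (by
          intro s hs
          have hsD := hIccD ht' s (Set.Ioo_subset_Icc_self hs)
          have hx's := hx'pos s hsD.1 hsD.2
          have hqs := hq s hsD.1 hsD.2
          have he := henergy s hsD.1 hsD.2
          have hsq : Real.sqrt (c * (x s / a) ^ (2 * m) - 1) ≤ x' s := by
        -- sqrt q ≤ sqrt (x'^2) = x'
            have : Real.sqrt (c * (x s / a) ^ (2 * m) - 1) ≤ Real.sqrt (x' s ^ 2) :=
              Real.sqrt_le_sqrt (by linarith)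
            rwa [Real.sqrt_sq hx's.le] at this
          have hge : 1 ≤ f (x s) * x' s := by
            simp only [hf_def]
            rw [one_div, inv_mul_eq_div, le_div_iff₀ (Real.sqrt_pos.mpr hqs)]
            simpa using hsq
          show (0:ℝ) ≤ f (x s) * x' s - 1
          linarith)
      rw [hxt0] at hm
      have hFa : F a = 0 := by simp [hF_def, intervalIntegral.integral_same]
      rw [hFa] at hm
      linarith
  -- cap : F (x t) ≤ ∫_{Ioi a} f
  have hcap : ∀ t : ℝ, t0 ≤ t → (t : EReal) < tstar →
      F (x t) ≤ ∫ μ in Set.Ioi a, f μ := by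
    intro t ht ht'
    have hax := hxa t ht ht'
    rw [hF_def]
    simp only
    rw [intervalIntegral.integral_of_le hax]
    apply setIntegral_mono_set hint
    · exact Filter.Eventually.of_forall fun μ => hfnn μ
    · exact (Set.Ioc_subset_Ioi_self).eventuallyLE
  have hI0 : 0 ≤ ∫ μ in Set.Ioi a, f μ :=
    setIntegral_nonneg measurableSet_Ioi fun μ _ => hfnn μ
  constructor
  · exact hint
  · by_contra hle
    push_neg at hle
    obtain ⟨t, htl, htu⟩ := EReal.lt_iff_exists_real_btwn.mp hle
    have htl' : t0 + ∫ μ in Set.Ioi a, f μ < t := EReal.coe_lt_coe_iff.mp htl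
    have ht : t0 ≤ t := by linarith
    have h1 := hstep t ht htu
    have h2 := hcap t ht htu
    linarith
end

section
/- Let 0 < R0 < R be real numbers, A : [R0, R] → ℝ continuous with A(r) ≤ 0 for all r ∈ [R0, R], and v : [R0, R] → ℝ twice continuously differentiable, satisfying v''(r) + A(r)·v(r) = 0 for all r ∈ [R0, R], together with v'(R0) = v(R0)/(2R0) and v(R) = 0. Then v is identically zero on [R0, R]. -/
/-- if A ≤ 0 on [R0,R] and v solves v'' + A·v = 0 with
v'(R0) = v(R0)/(2R0) and v(R) = 0, then v vanishes identically on [R0,R]. -/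
theorem statement17 (R0 R : ℝ) (hR0 : 0 < R0) (hRR : R0 < R)
    (A : ℝ → ℝ) (hA : ContinuousOn A (Set.Icc R0 R))
    (hAneg : ∀ r ∈ Set.Icc R0 R, A r ≤ 0)
    (v v' v'' : ℝ → ℝ)
    (hv1 : ∀ r ∈ Set.Icc R0 R, HasDerivAt v (v' r) r)
    (hv2 : ∀ r ∈ Set.Icc R0 R, HasDerivAt v' (v'' r) r)
    (hv2c : ContinuousOn v'' (Set.Icc R0 R))
    (hode : ∀ r ∈ Set.Icc R0 R, v'' r + A r * v r = 0)
    (hRobin : v' R0 = v R0 / (2 * R0))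
    (hDir : v R = 0) :
    ∀ r ∈ Set.Icc R0 R, v r = 0 := by
  have hsub : Set.Ioo R0 R ⊆ Set.Icc R0 R := Set.Ioo_subset_Icc_self
  set W : ℝ → ℝ := fun r => v r * v' r with hW
  have hWd : ∀ r ∈ Set.Icc R0 R,
      HasDerivAt W (v' r * v' r - A r * (v r * v r)) r := by
    intro r hr
    have h := (hv1 r hr).mul (hv2 r hr)
    have hrw : v'' r = -(A r * v r) := by have := hode r hr; linarith
    exact h.congr_deriv (by rw [hrw]; ring)
  have hWc : ContinuousOn W (Set.Icc R0 R) := fun r hr =>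
    ((hv1 r hr).continuousAt.mul (hv2 r hr).continuousAt).continuousWithinAt
  have hmono : MonotoneOn W (Set.Icc R0 R) := by
    apply monotoneOn_of_deriv_nonneg (convex_Icc _ _) hWc
    · intro r hr
      rw [interior_Icc] at hr
      exact (hWd r (hsub hr)).differentiableAt.differentiableWithinAt
    · intro r hr
      rw [interior_Icc] at hr
      rw [(hWd r (hsub hr)).deriv]
      have h1 : 0 ≤ v' r * v' r := mul_self_nonneg _
      have h2 : A r * (v r * v r) ≤ 0 :=
        mul_nonpos_of_nonpos_of_nonneg (hAneg r (hsub hr)) (mul_self_nonneg _)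
      linarith
  have hR0mem : R0 ∈ Set.Icc R0 R := ⟨le_refl _, hRR.le⟩
  have hRmem : R ∈ Set.Icc R0 R := ⟨hRR.le, le_refl _⟩
  have hWR : W R = 0 := by simp [hW, hDir]
  have hWR0nonneg : 0 ≤ W R0 := by
    rw [hW]; simp only
    rw [hRobin]
    have : v R0 * (v R0 / (2 * R0)) = v R0 * v R0 / (2 * R0) := by ring
    rw [this]
    exact div_nonneg (mul_self_nonneg _) (by linarith)
  have hWzero : ∀ r ∈ Set.Icc R0 R, W r = 0 := by
    intro r hr
    have h1 : W R0 ≤ W r := hmono hR0mem hr hr.1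
    have h2 : W r ≤ W R := hmono hr hRmem hr.2
    linarith
  -- v' vanishes on the interior
  have hv'Ioo : ∀ r ∈ Set.Ioo R0 R, v' r = 0 := by
    intro r hr
    have hev : W =ᶠ[nhds r] (fun _ => (0 : ℝ)) := by
      filter_upwards [Ioo_mem_nhds hr.1 hr.2] with x hx
      exact hWzero x (hsub hx)
    have h0 : HasDerivAt W 0 r := (hasDerivAt_const r (0:ℝ)).congr_of_eventuallyEq hev
    have huniq := (hWd r (hsub hr)).unique h0
    have h1 : 0 ≤ v' r * v' r := mul_self_nonneg _
    have h2 : A r * (v r * v r) ≤ 0 :=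
      mul_nonpos_of_nonpos_of_nonneg (hAneg r (hsub hr)) (mul_self_nonneg _)
    have : v' r * v' r = 0 := by linarith
    exact mul_self_eq_zero.mp this
  -- v(R0) = 0 and v'(R0) = 0
  have hvR0 : v R0 = 0 := by
    have := hWzero R0 hR0mem
    rw [hW] at this; simp only at this
    rw [hRobin] at this
    have h : v R0 * v R0 / (2 * R0) = 0 := by rw [← this]; ring
    have h2 : v R0 * v R0 = 0 := by
      have hne : (2*R0) ≠ 0 := by positivity
      field_simp [hne] at h
      simpa [mul_self_eq_zero] using h
    exact mul_self_eq_zero.mp h2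
  have hv'R0 : v' R0 = 0 := by rw [hRobin, hvR0]; simp
  have hv'Ico : ∀ r ∈ Set.Ico R0 R, v' r = 0 := by
    intro r hr
    rcases eq_or_lt_of_le hr.1 with h | h
    · rw [← h]; exact hv'R0
    · exact hv'Ioo r ⟨h, hr.2⟩
  -- v is constant on [R0,R], equal to v(R0) = 0
  have hvconst : ∀ y ∈ Set.Icc R0 R, v y = (fun _ => (0:ℝ)) y := by
    apply eq_of_has_deriv_right_eq
      (f' := fun _ => (0:ℝ)) (g := fun _ => (0:ℝ)) (a := R0) (b := R)
    · intro x hx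
      have := (hv1 x ⟨hx.1, hx.2.le⟩)
      rw [hv'Ico x hx] at this
      exact this.hasDerivWithinAt
    · intro x hx
      exact (hasDerivAt_const x (0:ℝ)).hasDerivWithinAt
    · exact fun x hx => (hv1 x hx).continuousAt.continuousWithinAt
    · exact continuousOn_const
    · simpa using hvR0
  intro r hr
  simpa using hvconst r hr
end

section
/- Let n = 3 and let x : [t0, +∞) → ℝ be a Schwarzschild profile solution defined on all of [t0, +∞). Then ∫_{t0}^{+∞} [ x''(t)²/(1 + x'(t)²)³ + 1/(x(t)²·(1 + x'(t)²)) ] · x(t)·√(1 + x'(t)²) dt < +∞; that is, the squared norm of the Euclidean second fundamental form (k1² + k2², with k1 = −x''/(1+x'²)^{3/2} and k2 = 1/(x·√(1+x'²))) of the surface of revolution generated by x is integrable with respect to the Euclidean area element x·√(1+x'²) dt dθ, so the surface has finite total curvature. -/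
open MeasureTheory

lemma schChi3_def (m a t : ℝ) :
    schChi 3 m a t = 4 * m / (2 * (a ^ 2 + t ^ 2) ^ 3 + m * (a ^ 2 + t ^ 2)) := by
  simp only [schChi]
  norm_num
  ring_nf

lemma schChi3_pos (m a t : ℝ) (hm : 0 < m) (ha : 0 < a) : 0 < schChi 3 m a t := by
  rw [schChi3_def]
  have hat : 0 < a ^ 2 + t ^ 2 := by positivity
  have hD : 0 < 2 * (a ^ 2 + t ^ 2) ^ 3 + m * (a ^ 2 + t ^ 2) := by
    have := pow_pos hat 3
    nlinarith [mul_pos hm hat]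
  positivity

lemma schChi3_bound (m t0 a t : ℝ) (hm : 0 < m) (ht0 : 0 < t0) (ht : t0 ≤ t) (ha : 0 < a) :
    schChi 3 m a t * a * t ≤ m / t0 ^ 4 := by
  have htp : 0 < t := lt_of_lt_of_le ht0 ht
  rw [schChi3_def]
  have hat : 0 < a ^ 2 + t ^ 2 := by positivity
  have hD : 0 < 2 * (a ^ 2 + t ^ 2) ^ 3 + m * (a ^ 2 + t ^ 2) := by
    have := pow_pos hat 3
    nlinarith [mul_pos hm hat]
  have h1 : 4 * m / (2 * (a ^ 2 + t ^ 2) ^ 3 + m * (a ^ 2 + t ^ 2)) * a * t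
      ≤ m / t ^ 4 := by
    rw [div_mul_eq_mul_div, div_mul_eq_mul_div, div_le_div_iff₀ hD (by positivity)]
    have h2at : 2 * a * t ≤ a ^ 2 + t ^ 2 := by nlinarith [sq_nonneg (a - t)]
    have ht4 : t ^ 4 ≤ (a ^ 2 + t ^ 2) ^ 2 := by nlinarith [sq_nonneg a, sq_nonneg (a^2)]
    nlinarith [mul_pos hm hat, pow_pos hat 3, mul_le_mul h2at ht4 (by positivity) hat.le,
      mul_pos hm (mul_pos hat hat)]
  refine h1.trans (div_le_div_of_nonneg_left hm.le (by positivity)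
    (pow_le_pow_left₀ ht0.le ht 4))

set_option maxHeartbeats 1000000 in
lemma pointwise_bound (m t0 t a b c : ℝ) (hm : 0 < m) (ht0 : 0 < t0) (ht : t0 ≤ t)
    (ha : 0 < a) (hb : 0 < b) (hf : 0 ≤ t * b - a)
    (hode : c = ((t * b - a) * schChi 3 m a t + 1 / a) * (1 + b ^ 2)) :
    (c ^ 2 / (1 + b ^ 2) ^ 3 + 1 / (a ^ 2 * (1 + b ^ 2))) * (a * Real.sqrt (1 + b ^ 2))
      ≤ (2 + m / t0 ^ 4) * (c / (1 + b ^ 2)) := by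
  set χ := schChi 3 m a t with hχ
  have hχpos : 0 < χ := schChi3_pos m a t hm ha
  have htp : 0 < t := lt_of_lt_of_le ht0 ht
  set G := (t * b - a) * χ + 1 / a with hG
  have hGpos : 0 < G := by
    have h1 : 0 ≤ (t * b - a) * χ := mul_nonneg hf hχpos.le
    have h2 : 0 < 1 / a := by positivity
    simp only [hG]; linarith
  have h1b : (0:ℝ) < 1 + b ^ 2 := by positivity
  set s := Real.sqrt (1 + b ^ 2) with hs
  have hs2 : s ^ 2 = 1 + b ^ 2 := Real.sq_sqrt h1b.le
  have hspos : 0 < s := Real.sqrt_pos.mpr h1b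
  have hs1 : 1 ≤ s := by
    rw [hs]
    exact Real.le_sqrt_of_sq_le (by nlinarith)
  have hbs : b ≤ s := Real.le_sqrt_of_sq_le (by nlinarith)
  have hLHS : (c ^ 2 / (1 + b ^ 2) ^ 3 + 1 / (a ^ 2 * (1 + b ^ 2))) * (a * s)
      = (a * G ^ 2 + 1 / a) / s := by
    rw [hode, ← hs2]
    field_simp
  have hgG : c / (1 + b ^ 2) = G := by
    rw [hode]; field_simp
  rw [hLHS, hgG]
  have hkey : a * G / s ≤ 1 + m / t0 ^ 4 := by
    have hsplit : a * G / s = (t * b - a) * χ * a / s + 1 / s := by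
      rw [hG]; field_simp
    rw [hsplit]
    have h1 : (t * b - a) * χ * a / s ≤ m / t0 ^ 4 := by
      have hnum : (t * b - a) * χ * a ≤ (m / t0 ^ 4) * s := by
        have h2 : (t * b - a) * χ * a ≤ t * b * χ * a := by
          have : t * b - a ≤ t * b := by linarith
          nlinarith [mul_nonneg hχpos.le ha.le]
        have h3 : t * b * χ * a ≤ (χ * a * t) * s := by
          have : χ * a * t * b ≤ χ * a * t * s :=
            mul_le_mul_of_nonneg_left hbs (by positivity)
          nlinarith
        have h4 : (χ * a * t) * s ≤ (m / t0 ^ 4) * s :=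
          mul_le_mul_of_nonneg_right (schChi3_bound m t0 a t hm ht0 ht ha) hspos.le
        linarith
      calc (t * b - a) * χ * a / s ≤ (m / t0 ^ 4) * s / s := by gcongr
        _ = m / t0 ^ 4 := by
            rw [mul_div_assoc, div_self hspos.ne', mul_one]
    have h2 : 1 / s ≤ 1 := by
      rw [div_le_one hspos]; exact hs1
    linarith
  have hinv : (1 / a) / s ≤ G := by
    have h1 : (1 / a) / s ≤ 1 / a := div_le_self (by positivity) hs1
    have h2 : 1 / a ≤ G := by
      rw [hG]; nlinarith [mul_nonneg hf hχpos.le]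
    linarith
  have hsplit2 : (a * G ^ 2 + 1 / a) / s = G * (a * G / s) + (1 / a) / s := by
    field_simp
  rw [hsplit2]
  have : G * (a * G / s) ≤ G * (1 + m / t0 ^ 4) :=
    mul_le_mul_of_nonneg_left hkey hGpos.le
  nlinarith


/-- for n = 3 a Schwarzschild profile solution defined on all of
[t0,+∞) generates a surface of revolution with finite Euclidean total
curvature: the squared norm k1² + k2² of the second fundamental form is
integrable against the area element x·√(1 + x'²) dt. -/
theorem statement19 (m R0 t0 : ℝ) (hm : 0 < m) (ht0 : 0 < t0) (htR : t0 < R0)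
    (x x' x'' : ℝ → ℝ) (hx : IsSchwarzschildProfile 3 m R0 t0 ⊤ x x' x'') :
    IntegrableOn (fun t : ℝ =>
        ((x'' t) ^ 2 / (1 + (x' t) ^ 2) ^ 3
          + 1 / ((x t) ^ 2 * (1 + (x' t) ^ 2)))
        * (x t * Real.sqrt (1 + (x' t) ^ 2)))
      (Set.Ici t0) := by
  have hd1 : ∀ t, t0 ≤ t → HasDerivAt x (x' t) t :=
    fun t ht => hx.hasDeriv t ht (EReal.coe_lt_top t)
  have hd2 : ∀ t, t0 ≤ t → HasDerivAt x' (x'' t) t :=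
    fun t ht => hx.hasDeriv2 t ht (EReal.coe_lt_top t)
  have hpos : ∀ t, t0 ≤ t → 0 < x t := fun t ht => hx.pos t ht (EReal.coe_lt_top t)
  have hode : ∀ t, t0 ≤ t → x'' t =
      ((t * x' t - x t) * schChi 3 m (x t) t + 1 / x t) * (1 + (x' t) ^ 2) := by
    intro t ht
    have h := hx.ode t ht (EReal.coe_lt_top t)
    have h3 : ((3:ℕ):ℝ) - 2 = 1 := by norm_num
    rw [h3] at h
    exact h
  have hx''cont : ContinuousOn x'' (Set.Ici t0) := by
    have hset : {t : ℝ | t0 ≤ t ∧ (t : EReal) < ⊤} = Set.Ici t0 := by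
      ext t; simp [EReal.coe_lt_top]
    have := hx.cont2
    rwa [hset] at this
  have hxcont : ContinuousOn x (Set.Ici t0) :=
    fun t ht => ((hd1 t ht).continuousAt).continuousWithinAt
  have hx'cont : ContinuousOn x' (Set.Ici t0) :=
    fun t ht => ((hd2 t ht).continuousAt).continuousWithinAt
  -- positivity of x'' given f ≥ 0
  have hodepos : ∀ t, t0 ≤ t → 0 ≤ t * x' t - x t → 0 < x'' t := by
    intro t ht hf
    rw [hode t ht]
    have hχ := schChi3_pos m (x t) t hm (hpos t ht)
    have h1 : 0 < 1 / x t := by have := hpos t ht; positivity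
    have h2 : 0 < (t * x' t - x t) * schChi 3 m (x t) t + 1 / x t := by
      nlinarith [mul_nonneg hf hχ.le]
    exact mul_pos h2 (by positivity)
  have hf0 : t0 * x' t0 - x t0 = 0 := by rw [hx.initDeriv]; ring
  have hdf : ∀ t, t0 ≤ t → HasDerivAt (fun u => u * x' u - x u) (t * x'' t) t := by
    intro t ht
    have h := ((hasDerivAt_id t).mul (hd2 t ht)).sub (hd1 t ht)
    refine HasDerivAt.congr_deriv h ?_
    simp [id]
  have hfcont : ContinuousOn (fun u => u * x' u - x u) (Set.Ici t0) :=
    (continuousOn_id.mul hx'cont).sub hxcont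
  -- x'' is positive everywhere on [t0, ∞)
  have hA : ∀ t, t0 ≤ t → 0 < x'' t := by
    by_contra hcon
    push_neg at hcon
    obtain ⟨s, hs0, hsneg⟩ := hcon
    set A := Set.Icc t0 s ∩ x'' ⁻¹' (Set.Iic 0) with hAdef
    have hAne : A.Nonempty := ⟨s, ⟨hs0, le_refl s⟩, hsneg⟩
    have hAc : IsClosed A :=
      (hx''cont.mono Set.Icc_subset_Ici_self).preimage_isClosed_of_isClosed
        isClosed_Icc isClosed_Iic
    have hbdd : BddBelow A := ⟨t0, fun u hu => hu.1.1⟩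
    set a := sInf A with hadef
    have haA : a ∈ A := hAc.csInf_mem hAne hbdd
    have hat0 : t0 ≤ a := haA.1.1
    have has : a ≤ s := haA.1.2
    have h0 : 0 < x'' t0 := hodepos t0 le_rfl (le_of_eq hf0.symm)
    have hane : t0 < a := by
      rcases eq_or_lt_of_le hat0 with h | h
      · exact absurd haA.2 (not_le.mpr (h ▸ h0))
      · exact h
    have hlt : ∀ u, t0 ≤ u → u < a → 0 < x'' u := by
      intro u hu1 hu2
      by_contra hneg
      push_neg at hneg
      have hu : u ∈ A := ⟨⟨hu1, hu2.le.trans has⟩, hneg⟩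
      exact absurd (csInf_le hbdd hu) (not_le.mpr hu2)
    have hmono : StrictMonoOn (fun u => u * x' u - x u) (Set.Icc t0 a) := by
      apply strictMonoOn_of_deriv_pos (convex_Icc t0 a)
        (hfcont.mono Set.Icc_subset_Ici_self)
      intro u hu
      rw [interior_Icc] at hu
      rw [(hdf u hu.1.le).deriv]
      exact mul_pos (ht0.trans hu.1) (hlt u hu.1.le hu.2)
    have hfa : 0 < a * x' a - x a := by
      have h := hmono (Set.left_mem_Icc.mpr hane.le) (Set.right_mem_Icc.mpr hane.le) hane
      simpa [hf0] using h
    exact absurd haA.2 (not_le.mpr (hodepos a hat0 hfa.le))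
  -- f nonneg on [t0, ∞)
  have hfmono : StrictMonoOn (fun u => u * x' u - x u) (Set.Ici t0) := by
    apply strictMonoOn_of_deriv_pos (convex_Ici t0) hfcont
    intro u hu
    rw [interior_Ici] at hu
    rw [(hdf u hu.le).deriv]
    exact mul_pos (ht0.trans hu) (hA u hu.le)
  have hfnn : ∀ t, t0 ≤ t → 0 ≤ t * x' t - x t := by
    intro t ht
    rcases eq_or_lt_of_le ht with h | h
    · rw [← h]; rw [hf0]
    · have h2 := hfmono Set.self_mem_Ici (Set.mem_Ici.mpr ht) h
      simp only [hf0] at h2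
      exact h2.le
  -- x' positive on [t0, ∞)
  have hx't0 : 0 < x' t0 := by
    have h1 := hpos t0 le_rfl
    have h2 := hx.initDeriv
    nlinarith
  have hx'mono : StrictMonoOn x' (Set.Ici t0) := by
    apply strictMonoOn_of_deriv_pos (convex_Ici t0) hx'cont
    intro u hu
    rw [interior_Ici] at hu
    rw [(hd2 u hu.le).deriv]
    exact hA u hu.le
  have hx'pos : ∀ t, t0 ≤ t → 0 < x' t := by
    intro t ht
    rcases eq_or_lt_of_le ht with h | h
    · rwa [← h]
    · exact hx't0.trans (hx'mono Set.self_mem_Ici (Set.mem_Ici.mpr ht) h)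
  -- the comparison function g
  set g := fun t => x'' t / (1 + (x' t) ^ 2) with hgdef
  have hdenomcont : ContinuousOn (fun t => 1 + (x' t) ^ 2) (Set.Ici t0) :=
    continuousOn_const.add (hx'cont.pow 2)
  have hgcont : ContinuousOn g (Set.Ici t0) :=
    hx''cont.div hdenomcont (fun t _ => by positivity)
  have hgnn : ∀ t, t0 ≤ t → 0 ≤ g t := by
    intro t ht
    exact le_of_lt (div_pos (hA t ht) (by positivity))
  have harctan : ∀ t, t0 ≤ t → HasDerivAt (fun u => Real.arctan (x' u)) (g t) t := by
    intro t ht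
    have h := (Real.hasDerivAt_arctan (x' t)).comp t (hd2 t ht)
    refine HasDerivAt.congr_deriv h ?_
    simp only [hgdef]
    ring
  have hgint : IntegrableOn g (Set.Ici t0) := by
    rw [integrableOn_Ici_iff_integrableOn_Ioi]
    apply integrableOn_Ioi_of_intervalIntegral_norm_bounded Real.pi t0
      (b := fun k : ℕ => t0 + k) (l := Filter.atTop)
    · intro k
      have hsub : Set.Ioc t0 (t0 + (k:ℝ)) ⊆ Set.Icc t0 (t0 + (k:ℝ)) := Set.Ioc_subset_Icc_self
      exact ((hgcont.mono Set.Icc_subset_Ici_self).integrableOn_Icc).mono_set hsub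
    · exact Filter.tendsto_atTop_add_const_left _ t0 tendsto_natCast_atTop_atTop
    · apply Filter.Eventually.of_forall
      intro k
      have hk : t0 ≤ t0 + (k:ℝ) := le_add_of_nonneg_right (Nat.cast_nonneg k)
      have hnorm : ∫ u in t0..(t0 + (k:ℝ)), ‖g u‖ = ∫ u in t0..(t0 + (k:ℝ)), g u := by
        apply intervalIntegral.integral_congr
        intro u hu
        rw [Set.uIcc_of_le hk] at hu
        exact Real.norm_of_nonneg (hgnn u hu.1)
      rw [hnorm, intervalIntegral.integral_eq_sub_of_hasDerivAt
        (f := fun u => Real.arctan (x' u))]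
      · have h1 := Real.arctan_lt_pi_div_two (x' (t0 + (k:ℝ)))
        have h2 := Real.neg_pi_div_two_lt_arctan (x' t0)
        linarith
      · intro u hu
        rw [Set.uIcc_of_le hk] at hu
        exact harctan u hu.1
      · apply ContinuousOn.intervalIntegrable
        rw [Set.uIcc_of_le hk]
        exact hgcont.mono Set.Icc_subset_Ici_self
  -- continuity of the integrand
  have hIcont : ContinuousOn (fun t : ℝ =>
      ((x'' t) ^ 2 / (1 + (x' t) ^ 2) ^ 3
        + 1 / ((x t) ^ 2 * (1 + (x' t) ^ 2)))
      * (x t * Real.sqrt (1 + (x' t) ^ 2))) (Set.Ici t0) := by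
    apply ContinuousOn.mul
    · apply ContinuousOn.add
      · exact (hx''cont.pow 2).div (hdenomcont.pow 3) (fun t _ => by positivity)
      · refine continuousOn_const.div ((hxcont.pow 2).mul hdenomcont) (fun t ht => ?_)
        have := hpos t ht
        positivity
    · exact hxcont.mul (Real.continuous_sqrt.comp_continuousOn hdenomcont)
  -- conclude by comparison
  have hCg : IntegrableOn (fun t => (2 + m / t0 ^ 4) * g t) (Set.Ici t0) :=
    hgint.const_mul _
  apply Integrable.mono' hCg (hIcont.aestronglyMeasurable measurableSet_Ici)
  rw [ae_restrict_iff' measurableSet_Ici]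
  apply ae_of_all
  intro t ht
  have ht' : t0 ≤ t := ht
  have hnn : 0 ≤ ((x'' t) ^ 2 / (1 + (x' t) ^ 2) ^ 3
      + 1 / ((x t) ^ 2 * (1 + (x' t) ^ 2))) * (x t * Real.sqrt (1 + (x' t) ^ 2)) := by
    apply mul_nonneg
    · positivity
    · exact mul_nonneg (hpos t ht').le (Real.sqrt_nonneg _)
  rw [Real.norm_of_nonneg hnn]
  exact pointwise_bound m t0 t (x t) (x' t) (x'' t) hm ht0 ht' (hpos t ht')
    (hx'pos t ht') (hfnn t ht') (hode t ht')
end
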